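/- arXiv:1503.07624 — 4 statements merged into one kernel-verified Lean document; each statement's English description precedes it below -/
import Mathlib

section
/- Suppose ARC and OPT (cache size N each) are run in parallel on the same request sequence, with OPT serving each request before ARC. If ARC has a miss on the current request and the requested page is not in ARC's history B₁ ∪ B₂, then ℓ' = t₁' + t₂' + b₁' + b₂' < N; consequently ℓ₁' < N and ℓ₂' < N. -/
abbrev Page := ℕ

/-- A valid offline demand-paging execution with cache size `N` on request
sequence `σ`, starting from the empty cache. `C i` is the cache just before
serving request `i` (so `C (i+1)` is the cache just after serving it).
Demand paging: on a hit the cache is unchanged; on a fault only the requested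
page may be brought in. -/
def OptExec (N : ℕ) (σ : List Page) (C : ℕ → Finset Page) : Prop :=
  C 0 = ∅ ∧
  (∀ i, (C i).card ≤ N) ∧
  ∀ i, i < σ.length →
    σ.getD i 0 ∈ C (i + 1) ∧
    C (i + 1) ⊆ C i ∪ {σ.getD i 0} ∧
    (σ.getD i 0 ∈ C i → C (i + 1) = C i)

/-- Number of page faults incurred by an offline execution `C` on `σ`. -/
def optFaults (σ : List Page) (C : ℕ → Finset Page) : ℕ :=
  ((List.range σ.length).filter (fun i => decide (σ.getD i 0 ∉ C i))).length

/-- The fault count of an optimal offline demand-paging algorithm (OPT)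
with cache size `N` on `σ`. -/
noncomputable def optCost (N : ℕ) (σ : List Page) : ℕ :=
  sInf {k | ∃ C, OptExec N σ C ∧ optFaults σ C = k}

/-- The state of the ARC cache: main lists `T1`, `T2` and history lists
`B1`, `B2` (each kept in recency order, MRU at the head, LRU at the end),
together with the adaptive parameter `p`. -/
structure ArcState where
  T1 : List Page
  T2 : List Page
  B1 : List Page
  B2 : List Page
  p  : ℕ

/-- ARC starts with empty lists and `p = 0`. -/
def ArcState.init : ArcState := ⟨[], [], [], [], 0⟩

/-- ARC's subroutine REPLACE: demote `LRU(T1)` to the MRU position of `B1`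
if `|T1| ≥ 1` and either (the requested page was in `B2` and `|T1| = p`) or
`|T1| > p`; otherwise demote `LRU(T2)` to the MRU position of `B2`. -/
def arcReplace (xInB2 : Bool) (s : ArcState) : ArcState :=
  if 1 ≤ s.T1.length ∧ ((xInB2 = true ∧ s.T1.length = s.p) ∨ s.p < s.T1.length) then
    { s with T1 := s.T1.dropLast, B1 := s.T1.getLast?.toList ++ s.B1 }
  else
    { s with T2 := s.T2.dropLast, B2 := s.T2.getLast?.toList ++ s.B2 }

/-- One step of ARC (cache size `N`, with the ±1 adaptation rule) on a
requested page `x`. -/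
def arcStep (N : ℕ) (s : ArcState) (x : Page) : ArcState :=
  if x ∈ s.T1 ∨ x ∈ s.T2 then
    -- cache hit: move `x` to the MRU position of `T2`
    { s with T1 := s.T1.erase x, T2 := x :: s.T2.erase x }
  else if x ∈ s.B1 then
    -- history hit in B1: adapt `p := min (p+1) N`, REPLACE, move `x` to MRU(T2)
    let s2 := arcReplace false { s with p := min (s.p + 1) N }
    { s2 with B1 := s2.B1.erase x, T2 := x :: s2.T2 }
  else if x ∈ s.B2 then
    -- history hit in B2: adapt `p := max (p-1) 0`, REPLACE, move `x` to MRU(T2)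
    let s2 := arcReplace true { s with p := s.p - 1 }
    { s2 with B2 := s2.B2.erase x, T2 := x :: s2.T2 }
  else
    -- cache and directory miss
    let s2 :=
      if s.T1.length + s.B1.length = N then
        if s.T1.length < N then
          arcReplace false { s with B1 := s.B1.dropLast }
        else
          { s with T1 := s.T1.dropLast }
      else if s.T1.length + s.B1.length < N ∧
          N ≤ s.T1.length + s.T2.length + s.B1.length + s.B2.length then
        arcReplace false
          (if s.T1.length + s.T2.length + s.B1.length + s.B2.length = 2 * N then
            { s with B2 := s.B2.dropLast }
          else s)
      else s
    { s2 with T1 := x :: s2.T1 }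

/-- Run ARC on a request sequence. -/
def arcRun (N : ℕ) : ArcState → List Page → ArcState
  | s, [] => s
  | s, x :: xs => arcRun N (arcStep N s x) xs

/-- Number of page faults incurred by ARC on a request sequence. -/
def arcCost (N : ℕ) : ArcState → List Page → ℕ
  | _, [] => 0
  | s, x :: xs => (if x ∈ s.T1 ∨ x ∈ s.T2 then 0 else 1) + arcCost N (arcStep N s x) xs

/-- `t = t₁ + t₂`, the number of pages in ARC's cache. -/
def arcT (s : ArcState) : ℕ := s.T1.length + s.T2.length

/-- `TOP(X)` for a recency-ordered list `X`: the longest prefix (i.e. the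
largest set of most-recently-used pages) of `X` all of whose pages are in
OPT's cache `O`; `topLen` is its size. -/
def topLen (X : List Page) (O : Finset Page) : ℕ :=
  (X.takeWhile (fun q => decide (q ∈ O))).length

/-- `t₁' = |TOP(T1)|`. -/
def arcT1' (s : ArcState) (O : Finset Page) : ℕ := topLen s.T1 O

/-- `t₂' = |TOP(T2)|`. -/
def arcT2' (s : ArcState) (O : Finset Page) : ℕ := topLen s.T2 O

/-- `b₁' = |TOP(L1) ∩ B1|` where `L1 = T1 · B1`. -/
def arcB1' (s : ArcState) (O : Finset Page) : ℕ :=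
  (((s.T1 ++ s.B1).takeWhile (fun q => decide (q ∈ O))).filter
    (fun q => decide (q ∈ s.B1))).length

/-- `b₂' = |TOP(L2) ∩ B2|` where `L2 = T2 · B2`. -/
def arcB2' (s : ArcState) (O : Finset Page) : ℕ :=
  (((s.T2 ++ s.B2).takeWhile (fun q => decide (q ∈ O))).filter
    (fun q => decide (q ∈ s.B2))).length

/-- The potential `Φ = p − [(b₁'−t) + 2(t₁'−t) + 3(b₂'−t) + 4(t₂'−t)]`
with the value `t` supplied explicitly. -/
def arcPhiAt (s : ArcState) (O : Finset Page) (t : ℤ) : ℤ :=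
  (s.p : ℤ) - (((arcB1' s O : ℤ) - t) + 2 * ((arcT1' s O : ℤ) - t)
    + 3 * ((arcB2' s O : ℤ) - t) + 4 * ((arcT2' s O : ℤ) - t))

/-- The potential `Φ = p − [(b₁'−t) + 2(t₁'−t) + 3(b₂'−t) + 4(t₂'−t)]`. -/
def arcPhi (s : ArcState) (O : Finset Page) : ℤ :=
  arcPhiAt s O (arcT s)

/-- ARC's cache directory: all pages it tracks. -/
def arcDir (s : ArcState) : List Page := s.T1 ++ s.T2 ++ s.B1 ++ s.B2


section Aux

lemma dropLast_append_getLast?_toList (l : List Page) :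
    l.dropLast ++ l.getLast?.toList = l := by
  cases l.eq_nil_or_concat with
  | inl h => simp [h]
  | inr h => obtain ⟨l', a, rfl⟩ := h; simp

lemma count_replace_T1B1 (b : Bool) (s : ArcState) (a : Page) :
    ((arcReplace b s).T1).count a + ((arcReplace b s).B1).count a
      = s.T1.count a + s.B1.count a := by
  have hc := congrArg (List.count a) (dropLast_append_getLast?_toList s.T1)
  simp only [List.count_append] at hc
  unfold arcReplace
  split <;> simp [List.count_append] <;> omega

lemma count_replace_T2B2 (b : Bool) (s : ArcState) (a : Page) :
    ((arcReplace b s).T2).count a + ((arcReplace b s).B2).count a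
      = s.T2.count a + s.B2.count a := by
  have hc := congrArg (List.count a) (dropLast_append_getLast?_toList s.T2)
  simp only [List.count_append] at hc
  unfold arcReplace
  split <;> simp [List.count_append] <;> omega

lemma count_replace_T1_le (b : Bool) (s : ArcState) (a : Page) :
    ((arcReplace b s).T1).count a ≤ s.T1.count a := by
  unfold arcReplace
  split <;> simp [List.count_append]
  exact (List.dropLast_sublist s.T1).count_le a

lemma count_replace_T2_le (b : Bool) (s : ArcState) (a : Page) :
    ((arcReplace b s).T2).count a ≤ s.T2.count a := by
  unfold arcReplace
  split <;> simp [List.count_append]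
  exact (List.dropLast_sublist s.T2).count_le a

lemma count_arcDir (s : ArcState) (a : Page) :
    (arcDir s).count a
      = s.T1.count a + s.T2.count a + s.B1.count a + s.B2.count a := by
  simp [arcDir, List.count_append]; omega

lemma count_dir_replace (b : Bool) (s : ArcState) (a : Page) :
    (arcDir (arcReplace b s)).count a = (arcDir s).count a := by
  have h1 := count_replace_T1B1 b s a
  have h2 := count_replace_T2B2 b s a
  rw [count_arcDir, count_arcDir]
  omega

lemma nodup_arcDir_arcStep (N : ℕ) (s : ArcState) (x : Page)
    (h : (arcDir s).Nodup) : (arcDir (arcStep N s x)).Nodup := by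
  rw [List.nodup_iff_count_le_one] at h ⊢
  intro a
  have hd := h a
  rw [count_arcDir] at hd
  unfold arcStep
  split
  · -- cache hit
    rename_i hx
    have hx' : 1 ≤ s.T1.count x + s.T2.count x := by
      rcases hx with hx | hx
      · have := List.count_pos_iff.mpr hx; omega
      · have := List.count_pos_iff.mpr hx; omega
    rw [count_arcDir]
    simp only [List.count_cons, List.count_erase]
    rcases eq_or_ne x a with rfl | hne
    · simp; omega
    · simp [hne, hne.symm]; omega
  · split
    · -- B1 history hit
      rename_i hx hb
      have hb' : 1 ≤ s.B1.count x := List.count_pos_iff.mpr hb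
      have e1 := count_replace_T1B1 false { s with p := min (s.p + 1) N } a
      have e2 := count_replace_T2B2 false { s with p := min (s.p + 1) N } a
      have l1 := count_replace_T1_le false { s with p := min (s.p + 1) N } a
      have l2 := count_replace_T2_le false { s with p := min (s.p + 1) N } a
      have e1x := count_replace_T1B1 false { s with p := min (s.p + 1) N } x
      have l1x := count_replace_T1_le false { s with p := min (s.p + 1) N } x
      have l2x := count_replace_T2_le false { s with p := min (s.p + 1) N } x
      have e2x := count_replace_T2B2 false { s with p := min (s.p + 1) N } x
      dsimp only at e1 e2 l1 l2 e1x l1x l2x e2x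
      rw [count_arcDir]
      simp only [List.count_cons, List.count_erase]
      rcases eq_or_ne x a with rfl | hne
      · simp; omega
      · simp [hne, hne.symm]; omega
    · split
      · -- B2 history hit
        rename_i hx hb1 hb
        have hb' : 1 ≤ s.B2.count x := List.count_pos_iff.mpr hb
        have e1 := count_replace_T1B1 true { s with p := s.p - 1 } a
        have e2 := count_replace_T2B2 true { s with p := s.p - 1 } a
        have l1 := count_replace_T1_le true { s with p := s.p - 1 } a
        have l2 := count_replace_T2_le true { s with p := s.p - 1 } a
        have e1x := count_replace_T1B1 true { s with p := s.p - 1 } x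
        have l1x := count_replace_T1_le true { s with p := s.p - 1 } x
        have l2x := count_replace_T2_le true { s with p := s.p - 1 } x
        have e2x := count_replace_T2B2 true { s with p := s.p - 1 } x
        dsimp only at e1 e2 l1 l2 e1x l1x l2x e2x
        rw [count_arcDir]
        simp only [List.count_cons, List.count_erase]
        rcases eq_or_ne x a with rfl | hne
        · simp; omega
        · simp [hne, hne.symm]; omega
      · -- complete miss
        rename_i hx hb1 hb2
        push_neg at hx
        have hx1 : s.T1.count x = 0 := List.count_eq_zero.mpr hx.1
        have hx2 : s.T2.count x = 0 := List.count_eq_zero.mpr hx.2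
        have hxb1 : s.B1.count x = 0 := List.count_eq_zero.mpr hb1
        have hxb2 : s.B2.count x = 0 := List.count_eq_zero.mpr hb2
        have key : ∀ (s2 : ArcState),
            (∀ c, (arcDir s2).count c ≤ (arcDir s).count c) →
            ((arcDir { s2 with T1 := x :: s2.T1 }).count a ≤ 1) := by
          intro s2 h2
          have h2a := h2 a
          have h2x := h2 x
          simp only [count_arcDir] at h2a h2x ⊢
          simp only [List.count_cons]
          rcases eq_or_ne a x with rfl | hne
          · simp; omega
          · simp [hne, hne.symm]; omega
        apply key
        intro c
        have hdc := h c
        split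
        · split
          · -- arcReplace false {s with B1 := s.B1.dropLast}
            rw [count_dir_replace, count_arcDir, count_arcDir]
            have := (List.dropLast_sublist s.B1).count_le c
            simp only []
            omega
          · rw [count_arcDir, count_arcDir]
            have := (List.dropLast_sublist s.T1).count_le c
            simp only []
            omega
        · split
          · rw [count_dir_replace]
            split
            · rw [count_arcDir, count_arcDir]
              have := (List.dropLast_sublist s.B2).count_le c
              simp only []
              omega
            · exact le_refl _
          · exact le_refl _

lemma nodup_arcDir_arcRun (N : ℕ) (L : List Page) :
    ∀ s : ArcState, (arcDir s).Nodup → (arcDir (arcRun N s L)).Nodup := by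
  induction L with
  | nil => intro s h; exact h
  | cons x xs ih =>
    intro s h
    exact ih _ (nodup_arcDir_arcStep N s x h)

lemma takeWhile_append_ite (p : Page → Bool) (A B : List Page) :
    (A ++ B).takeWhile p
      = if A.takeWhile p = A then A ++ B.takeWhile p else A.takeWhile p := by
  induction A with
  | nil => simp
  | cons a A ih =>
    by_cases hp : p a <;> simp [List.takeWhile, hp, ih] <;> split <;> simp_all

lemma topLen_append_le (A B : List Page) (O : Finset Page) :
    topLen (A ++ B) O ≤ topLen A O +
      (((A ++ B).takeWhile (fun q => decide (q ∈ O))).filter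
        (fun q => decide (q ∈ B))).length := by
  classical
  rw [topLen, topLen, takeWhile_append_ite (fun q => decide (q ∈ O)) A B]
  by_cases h : A.takeWhile (fun q => decide (q ∈ O)) = A
  · rw [if_pos h, h]
    have hfb : (B.takeWhile (fun q => decide (q ∈ O))).filter (fun q => decide (q ∈ B))
        = B.takeWhile (fun q => decide (q ∈ O)) := by
      apply List.filter_eq_self.mpr
      intro a ha
      exact decide_eq_true ((List.takeWhile_sublist _).subset ha)
    rw [List.length_append, List.filter_append, List.length_append, hfb]
    omega
  · rw [if_neg h]
    omega

lemma length_le_card_of_nodup (L : List Page) (S : Finset Page)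
    (h : L.Nodup) (hsub : ∀ y ∈ L, y ∈ S) : L.length ≤ S.card := by
  classical
  rw [← List.toFinset_card_of_nodup h]
  exact Finset.card_le_card (fun y hy => hsub y (List.mem_toFinset.mp hy))

end Aux

/-- Lemma `lem:a`. In the parallel execution of ARC and OPT
(OPT serving each request first), if ARC misses on request `σ_j` and the
requested page is not in ARC's history `B₁ ∪ B₂`, then
`ℓ' = t₁' + t₂' + b₁' + b₂' < N`; consequently `ℓ₁' < N` and `ℓ₂' < N`
(the primed quantities being taken w.r.t. OPT's cache `C (j+1)`, i.e. after
OPT has served `σ_j`). -/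
theorem arc_lemma_a (N : ℕ) (σ : List Page) (C : ℕ → Finset Page)
    (hC : OptExec N σ C) (hCopt : optFaults σ C = optCost N σ)
    (j : ℕ) (hj : j < σ.length)
    (s : ArcState) (hs : s = arcRun N ArcState.init (σ.take j))
    (hmiss : σ.getD j 0 ∉ s.T1 ∧ σ.getD j 0 ∉ s.T2)
    (hnohist : σ.getD j 0 ∉ s.B1 ∧ σ.getD j 0 ∉ s.B2) :
    arcT1' s (C (j + 1)) + arcT2' s (C (j + 1))
        + arcB1' s (C (j + 1)) + arcB2' s (C (j + 1)) < N ∧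
      topLen (s.T1 ++ s.B1) (C (j + 1)) < N ∧
      topLen (s.T2 ++ s.B2) (C (j + 1)) < N := by
  classical
  set O := C (j + 1) with hO
  set x := σ.getD j 0 with hxdef
  have hxO : x ∈ O := (hC.2.2 j hj).1
  have hcard : O.card ≤ N := hC.2.1 (j + 1)
  have hnd : (arcDir s).Nodup := by
    rw [hs]
    exact nodup_arcDir_arcRun N _ _ (by simp [arcDir, ArcState.init])
  rw [List.nodup_iff_count_le_one] at hnd
  set L : List Page :=
      s.T1.takeWhile (fun q => decide (q ∈ O)) ++
      s.T2.takeWhile (fun q => decide (q ∈ O)) ++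
      ((s.T1 ++ s.B1).takeWhile (fun q => decide (q ∈ O))).filter
        (fun q => decide (q ∈ s.B1)) ++
      ((s.T2 ++ s.B2).takeWhile (fun q => decide (q ∈ O))).filter
        (fun q => decide (q ∈ s.B2)) with hL
  have hlen : L.length = arcT1' s O + arcT2' s O + arcB1' s O + arcB2' s O := by
    simp only [hL, List.length_append, arcT1', arcT2', arcB1', arcB2', topLen]
  have hndL : L.Nodup := by
    rw [List.nodup_iff_count_le_one]
    intro a
    have hda := hnd a
    rw [count_arcDir] at hda
    have c1 : (s.T1.takeWhile (fun q => decide (q ∈ O))).count a ≤ s.T1.count a :=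
      (List.takeWhile_sublist _).count_le a
    have c2 : (s.T2.takeWhile (fun q => decide (q ∈ O))).count a ≤ s.T2.count a :=
      (List.takeWhile_sublist _).count_le a
    have c3 : (((s.T1 ++ s.B1).takeWhile (fun q => decide (q ∈ O))).filter
        (fun q => decide (q ∈ s.B1))).count a ≤ s.B1.count a := by
      by_cases hb : a ∈ s.B1
      · have hW : ((s.T1 ++ s.B1).takeWhile (fun q => decide (q ∈ O))).count a
            ≤ s.T1.count a + s.B1.count a := by
          calc ((s.T1 ++ s.B1).takeWhile (fun q => decide (q ∈ O))).count a
              ≤ (s.T1 ++ s.B1).count a := (List.takeWhile_sublist _).count_le a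
            _ = s.T1.count a + s.B1.count a := by simp [List.count_append]
        have hb1 : 1 ≤ s.B1.count a := List.count_pos_iff.mpr hb
        have hf : (((s.T1 ++ s.B1).takeWhile (fun q => decide (q ∈ O))).filter
            (fun q => decide (q ∈ s.B1))).count a
            ≤ ((s.T1 ++ s.B1).takeWhile (fun q => decide (q ∈ O))).count a :=
          List.filter_sublist.count_le a
        omega
      · have hno : a ∉ (((s.T1 ++ s.B1).takeWhile (fun q => decide (q ∈ O))).filter
            (fun q => decide (q ∈ s.B1))) := by
          intro ha
          exact hb (by simpa using (List.mem_filter.mp ha).2)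
        rw [List.count_eq_zero.mpr hno]
        omega
    have c4 : (((s.T2 ++ s.B2).takeWhile (fun q => decide (q ∈ O))).filter
        (fun q => decide (q ∈ s.B2))).count a ≤ s.B2.count a := by
      by_cases hb : a ∈ s.B2
      · have hW : ((s.T2 ++ s.B2).takeWhile (fun q => decide (q ∈ O))).count a
            ≤ s.T2.count a + s.B2.count a := by
          calc ((s.T2 ++ s.B2).takeWhile (fun q => decide (q ∈ O))).count a
              ≤ (s.T2 ++ s.B2).count a := (List.takeWhile_sublist _).count_le a
            _ = s.T2.count a + s.B2.count a := by simp [List.count_append]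
        have hb1 : 1 ≤ s.B2.count a := List.count_pos_iff.mpr hb
        have hf : (((s.T2 ++ s.B2).takeWhile (fun q => decide (q ∈ O))).filter
            (fun q => decide (q ∈ s.B2))).count a
            ≤ ((s.T2 ++ s.B2).takeWhile (fun q => decide (q ∈ O))).count a :=
          List.filter_sublist.count_le a
        omega
      · have hno : a ∉ (((s.T2 ++ s.B2).takeWhile (fun q => decide (q ∈ O))).filter
            (fun q => decide (q ∈ s.B2))) := by
          intro ha
          exact hb (by simpa using (List.mem_filter.mp ha).2)
        rw [List.count_eq_zero.mpr hno]
        omega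
    rw [hL]
    simp only [List.count_append]
    omega
  have hsub : ∀ y ∈ L, y ∈ O.erase x := by
    intro y hy
    rw [hL] at hy
    simp only [List.mem_append] at hy
    have hyO : y ∈ O ∧ y ≠ x := by
      rcases hy with ((h1 | h2) | h3) | h4
      · refine ⟨by simpa using List.mem_takeWhile_imp h1, ?_⟩
        have hyt : y ∈ s.T1 := (List.takeWhile_sublist _).subset h1
        rintro rfl; exact hmiss.1 hyt
      · refine ⟨by simpa using List.mem_takeWhile_imp h2, ?_⟩
        have hyt : y ∈ s.T2 := (List.takeWhile_sublist _).subset h2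
        rintro rfl; exact hmiss.2 hyt
      · obtain ⟨hw, hb⟩ := List.mem_filter.mp h3
        refine ⟨by simpa using List.mem_takeWhile_imp hw, ?_⟩
        have hyb : y ∈ s.B1 := by simpa using hb
        rintro rfl; exact hnohist.1 hyb
      · obtain ⟨hw, hb⟩ := List.mem_filter.mp h4
        refine ⟨by simpa using List.mem_takeWhile_imp hw, ?_⟩
        have hyb : y ∈ s.B2 := by simpa using hb
        rintro rfl; exact hnohist.2 hyb
    exact Finset.mem_erase.mpr ⟨hyO.2, hyO.1⟩
  have hcount := length_le_card_of_nodup L (O.erase x) hndL hsub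
  have hcarde : (O.erase x).card = O.card - 1 := Finset.card_erase_of_mem hxO
  have hOpos : 0 < O.card := Finset.card_pos.mpr ⟨x, hxO⟩
  have key : arcT1' s O + arcT2' s O + arcB1' s O + arcB2' s O < N := by omega
  have e1 : arcT1' s O = topLen s.T1 O := rfl
  have e2 : arcB1' s O = (((s.T1 ++ s.B1).takeWhile (fun q => decide (q ∈ O))).filter
      (fun q => decide (q ∈ s.B1))).length := rfl
  have e3 : arcT2' s O = topLen s.T2 O := rfl
  have e4 : arcB2' s O = (((s.T2 ++ s.B2).takeWhile (fun q => decide (q ∈ O))).filter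
      (fun q => decide (q ∈ s.B2))).length := rfl
  have t1 := topLen_append_le s.T1 s.B1 O
  have t2 := topLen_append_le s.T2 s.B2 O
  exact ⟨key, by omega, by omega⟩
end

section
/- A call to ARC's procedure REPLACE either moves an element from T₁ to B₁ or from T₂ to B₂, and in either case the resulting change ΔΦ_R in the potential Φ = p − [(b₁'−t) + 2(t₁'−t) + 3(b₂'−t) + 4(t₂'−t)] satisfies ΔΦ_R ≤ 1. Specifically, if the moved element lies in T₁' (resp. T₂') then the potential change is +1, and if it lies in T₁ − T₁' (resp. T₂ − T₂') then the potential does not change. -/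
section Helpers

variable {α : Type*}

lemma tw_all (P : α → Bool) : ∀ {A : List α}, (∀ a ∈ A, P a = true) → ∀ B : List α,
    (A ++ B).takeWhile P = A ++ B.takeWhile P
  | [], _, B => by simp
  | a :: A, h, B => by
    simp only [List.cons_append, List.takeWhile_cons, h a List.mem_cons_self]
    simp [tw_all P (fun x hx => h x (List.mem_cons_of_mem _ hx)) B]

lemma tw_stop (P : α → Bool) : ∀ {A : List α}, ¬(∀ a ∈ A, P a = true) → ∀ B : List α,
    (A ++ B).takeWhile P = A.takeWhile P
  | [], h, _ => absurd (by simp) h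
  | a :: A, h, B => by
    by_cases hp : P a = true
    · have : ¬(∀ x ∈ A, P x = true) := fun hh => h (by
        intro x hx
        rcases List.mem_cons.1 hx with rfl | hx
        · exact hp
        · exact hh x hx)
      simp [List.takeWhile_cons, hp, tw_stop P this B]
    · simp [List.takeWhile_cons, hp]

end Helpers

lemma nodup_facts {A B : List Page} {q : Page} (hnd : (A ++ [q] ++ B).Nodup) :
    q ∉ A ∧ q ∉ B ∧ ∀ a ∈ A, a ∉ B := by
  simp [List.nodup_append] at hnd
  exact ⟨fun h => (hnd.2.2 q h).1 rfl, hnd.2.1.1, fun a ha hb => (hnd.2.2 a ha).2 a hb rfl⟩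

lemma key (A B : List Page) (q : Page) (P : Page → Bool)
    (hnd : (A ++ [q] ++ B).Nodup) :
    (q ∈ (A ++ [q]).takeWhile P ∧
      ((((A ++ [q]) ++ B).takeWhile P).filter (fun r => decide (r ∈ q :: B))).length
        = ((((A ++ [q]) ++ B).takeWhile P).filter (fun r => decide (r ∈ B))).length + 1 ∧
      ((A ++ [q]).takeWhile P).length = (A.takeWhile P).length + 1) ∨
    (q ∉ (A ++ [q]).takeWhile P ∧
      ((((A ++ [q]) ++ B).takeWhile P).filter (fun r => decide (r ∈ q :: B))).length
        = ((((A ++ [q]) ++ B).takeWhile P).filter (fun r => decide (r ∈ B))).length ∧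
      ((A ++ [q]).takeWhile P).length = (A.takeWhile P).length) := by
  obtain ⟨hqA, hqB, hAB⟩ := nodup_facts hnd
  by_cases hA : ∀ a ∈ A, P a = true
  · have hTA : A.takeWhile P = A := List.takeWhile_eq_self_iff.2 hA
    by_cases hq : P q = true
    · have hAq : ∀ a ∈ A ++ [q], P a = true := by
        intro a ha; rcases List.mem_append.1 ha with ha | ha
        · exact hA a ha
        · simp at ha; subst ha; exact hq
      have hTAq : (A ++ [q]).takeWhile P = A ++ [q] := List.takeWhile_eq_self_iff.2 hAq
      left
      refine ⟨by rw [hTAq]; simp, ?_⟩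
      rw [tw_all P hAq B, hTAq]
      have hsub : ∀ r ∈ B.takeWhile P, r ∈ B := fun r hr => (List.takeWhile_prefix P).subset hr
      have e1 : A.filter (fun r => decide (r ∈ q :: B)) = [] :=
        List.filter_eq_nil_iff.2 (by intro a ha; simp; exact ⟨fun h => hqA (h ▸ ha), hAB a ha⟩)
      have e2 : [q].filter (fun r => decide (r ∈ q :: B)) = [q] := by simp
      have e3 : (B.takeWhile P).filter (fun r => decide (r ∈ q :: B)) = B.takeWhile P :=
        List.filter_eq_self.2 (by intro a ha; simp; exact Or.inr (hsub a ha))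
      have f1 : ((A ++ [q]) ++ B.takeWhile P).filter (fun r => decide (r ∈ q :: B))
          = [q] ++ B.takeWhile P := by
        rw [List.filter_append, List.filter_append, e1, e2, e3]; simp
      have e4 : A.filter (fun r => decide (r ∈ B)) = [] :=
        List.filter_eq_nil_iff.2 (by intro a ha; simp; exact hAB a ha)
      have e5 : [q].filter (fun r => decide (r ∈ B)) = [] := by simp [hqB]
      have e6 : (B.takeWhile P).filter (fun r => decide (r ∈ B)) = B.takeWhile P :=
        List.filter_eq_self.2 (by intro a ha; simp; exact hsub a ha)
      have f2 : ((A ++ [q]) ++ B.takeWhile P).filter (fun r => decide (r ∈ B))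
          = B.takeWhile P := by
        rw [List.filter_append, List.filter_append, e4, e5, e6]; simp
      rw [f1, f2, hTA]
      simp [List.length_append]
    · have hTq : List.takeWhile P ([q] ++ B) = [] := by simp [List.takeWhile_cons, hq]
      have hW : ((A ++ [q]) ++ B).takeWhile P = A := by
        rw [List.append_assoc, tw_all P hA ([q] ++ B), hTq, List.append_nil]
      have hWq : (A ++ [q]).takeWhile P = A := by
        have := tw_all P hA [q]
        rw [this]; simp [List.takeWhile_cons, hq]
      right
      refine ⟨by rw [hWq]; exact hqA, ?_, by rw [hWq, hTA]⟩
      rw [hW]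
      rw [List.filter_eq_nil_iff.2 (by intro a ha; simp; exact ⟨fun h => hqA (h ▸ ha), hAB a ha⟩)]
      rw [List.filter_eq_nil_iff.2 (by intro a ha; simp; exact hAB a ha)]
  · have hW : ((A ++ [q]) ++ B).takeWhile P = A.takeWhile P := by
      rw [List.append_assoc]; exact tw_stop P hA _
    have hWq : (A ++ [q]).takeWhile P = A.takeWhile P := tw_stop P hA _
    have hsub : ∀ r ∈ A.takeWhile P, r ∈ A := fun r hr => (List.takeWhile_prefix P).subset hr
    right
    refine ⟨by rw [hWq]; exact fun h => hqA (hsub q h), ?_, by rw [hWq]⟩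
    rw [hW]
    rw [List.filter_eq_nil_iff.2 (by
      intro a ha; have := hsub a ha; simp
      exact ⟨fun h => hqA (h ▸ this), hAB a this⟩)]
    rw [List.filter_eq_nil_iff.2 (by intro a ha; simp; exact hAB a (hsub a ha))]

/-- Lemma `lem:b`. A call to ARC's procedure REPLACE either
moves the element `LRU(T1)` from `T1` to (the MRU position of) `B1`, or moves
`LRU(T2)` from `T2` to `B2`; in either case the resulting change `ΔΦ_R` of the
potential `Φ = p − [(b₁'−t) + 2(t₁'−t) + 3(b₂'−t) + 4(t₂'−t)]` (with `t` held
at its value at the moment of the call) satisfies `ΔΦ_R ≤ 1`. Specifically,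
if the moved element lies in `T1'` (resp. `T2'`) the change is exactly `+1`,
and if it lies in `T1 − T1'` (resp. `T2 − T2'`) the potential is unchanged. -/
theorem arc_replace_lemma (N : ℕ) (s : ArcState) (xInB2 : Bool)
    (O : Finset Page) (hO : O.card ≤ N)
    (hN : 1 ≤ N) (hfull : s.T1.length + s.T2.length = N)
    (hnd : (s.T1 ++ s.T2 ++ s.B1 ++ s.B2).Nodup)
    (hcall : (1 ≤ s.T1.length ∧
        ((xInB2 = true ∧ s.T1.length = s.p) ∨ s.p < s.T1.length)) ∨ s.T2 ≠ []) :
    ((∃ q, s.T1.getLast? = some q ∧ (arcReplace xInB2 s).T1 = s.T1.dropLast ∧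
        (arcReplace xInB2 s).B1 = q :: s.B1) ∨
      (∃ q, s.T2.getLast? = some q ∧ (arcReplace xInB2 s).T2 = s.T2.dropLast ∧
        (arcReplace xInB2 s).B2 = q :: s.B2)) ∧
    arcPhiAt (arcReplace xInB2 s) O (arcT s) - arcPhiAt s O (arcT s) ≤ 1 ∧
    (∀ q, (arcReplace xInB2 s).B1 = q :: s.B1 →
      (q ∈ s.T1.takeWhile (fun r => decide (r ∈ O)) →
        arcPhiAt (arcReplace xInB2 s) O (arcT s) - arcPhiAt s O (arcT s) = 1) ∧
      (q ∉ s.T1.takeWhile (fun r => decide (r ∈ O)) →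
        arcPhiAt (arcReplace xInB2 s) O (arcT s) - arcPhiAt s O (arcT s) = 0)) ∧
    (∀ q, (arcReplace xInB2 s).B2 = q :: s.B2 →
      (q ∈ s.T2.takeWhile (fun r => decide (r ∈ O)) →
        arcPhiAt (arcReplace xInB2 s) O (arcT s) - arcPhiAt s O (arcT s) = 1) ∧
      (q ∉ s.T2.takeWhile (fun r => decide (r ∈ O)) →
        arcPhiAt (arcReplace xInB2 s) O (arcT s) - arcPhiAt s O (arcT s) = 0)) := by
  by_cases h1 : 1 ≤ s.T1.length ∧
      ((xInB2 = true ∧ s.T1.length = s.p) ∨ s.p < s.T1.length)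
  · -- T1 branch
    have hne : s.T1 ≠ [] := List.ne_nil_of_length_pos h1.1
    have hsome : s.T1.getLast? = some (s.T1.getLast hne) := List.getLast?_eq_getLast hne
    set q0 := s.T1.getLast hne with hq0
    have hrep : arcReplace xInB2 s = { s with T1 := s.T1.dropLast, B1 := q0 :: s.B1 } := by
      simp [arcReplace, h1, hsome]
    have hsplit : s.T1.dropLast ++ [q0] = s.T1 := List.dropLast_append_getLast hne
    have hnd1 : (s.T1.dropLast ++ [q0] ++ s.B1).Nodup := by
      rw [hsplit]
      refine List.Nodup.sublist ?_ hnd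
      refine List.Sublist.trans ?_ (List.sublist_append_left _ s.B2)
      rw [List.append_assoc]
      exact (List.sublist_append_right s.T2 s.B1).append_left s.T1
    have hkey := key s.T1.dropLast s.B1 q0 (fun r => decide (r ∈ O)) hnd1
    rw [hsplit] at hkey
    have hL : s.T1.dropLast ++ q0 :: s.B1 = s.T1 ++ s.B1 := by
      conv_rhs => rw [← hsplit]
      simp
    have hnb1 : arcB1' (arcReplace xInB2 s) O =
        (((s.T1 ++ s.B1).takeWhile (fun r => decide (r ∈ O))).filter
          (fun r => decide (r ∈ q0 :: s.B1))).length := by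
      rw [hrep]; simp only [arcB1']; rw [hL]
    have hnt1 : arcT1' (arcReplace xInB2 s) O =
        (s.T1.dropLast.takeWhile (fun r => decide (r ∈ O))).length := by
      rw [hrep]; rfl
    have hphi : arcPhiAt (arcReplace xInB2 s) O (arcT s) - arcPhiAt s O (arcT s)
        = (arcB1' s O : ℤ) + 2 * (arcT1' s O : ℤ)
          - (arcB1' (arcReplace xInB2 s) O : ℤ) - 2 * (arcT1' (arcReplace xInB2 s) O : ℤ) := by
      have hb2 : arcB2' (arcReplace xInB2 s) O = arcB2' s O := by rw [hrep]; rfl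
      have ht2 : arcT2' (arcReplace xInB2 s) O = arcT2' s O := by rw [hrep]; rfl
      have hp : (arcReplace xInB2 s).p = s.p := by rw [hrep]
      simp only [arcPhiAt, hb2, ht2, hp]; ring
    have hval : arcPhiAt (arcReplace xInB2 s) O (arcT s) - arcPhiAt s O (arcT s)
        = if q0 ∈ s.T1.takeWhile (fun r => decide (r ∈ O)) then 1 else 0 := by
      rw [hphi, hnb1, hnt1]
      rcases hkey with ⟨hmem, hfil, htw⟩ | ⟨hmem, hfil, htw⟩
      · rw [if_pos hmem, hfil]
        simp only [arcB1', arcT1', topLen]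
        rw [htw]; push_cast; ring
      · rw [if_neg hmem, hfil]
        simp only [arcB1', arcT1', topLen]
        rw [htw]; push_cast; ring
    refine ⟨Or.inl ⟨q0, hsome, by rw [hrep], by rw [hrep]⟩, ?_, ?_, ?_⟩
    · rw [hval]; split <;> norm_num
    · intro q' hq'
      rw [hrep] at hq'
      simp only [List.cons.injEq] at hq'
      obtain ⟨rfl, -⟩ := hq'
      exact ⟨fun h => by rw [hval, if_pos h], fun h => by rw [hval, if_neg h]⟩
    · intro q' hq'
      rw [hrep] at hq'
      exfalso
      have := congrArg List.length hq'
      simp at this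
  · -- T2 branch
    have hne : s.T2 ≠ [] := hcall.resolve_left h1
    have hsome : s.T2.getLast? = some (s.T2.getLast hne) := List.getLast?_eq_getLast hne
    set q0 := s.T2.getLast hne with hq0
    have hrep : arcReplace xInB2 s = { s with T2 := s.T2.dropLast, B2 := q0 :: s.B2 } := by
      simp [arcReplace, h1, hsome]
    have hsplit : s.T2.dropLast ++ [q0] = s.T2 := List.dropLast_append_getLast hne
    have hnd1 : (s.T2.dropLast ++ [q0] ++ s.B2).Nodup := by
      rw [hsplit]
      refine List.Nodup.sublist ?_ hnd
      have ha : List.Sublist (s.T2 ++ s.B2) (s.T2 ++ (s.B1 ++ s.B2)) :=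
        (List.sublist_append_right s.B1 s.B2).append_left s.T2
      have hb : List.Sublist (s.T2 ++ (s.B1 ++ s.B2)) (s.T1 ++ (s.T2 ++ (s.B1 ++ s.B2))) :=
        List.sublist_append_right _ _
      simpa [List.append_assoc] using ha.trans hb
    have hkey := key s.T2.dropLast s.B2 q0 (fun r => decide (r ∈ O)) hnd1
    rw [hsplit] at hkey
    have hL : s.T2.dropLast ++ q0 :: s.B2 = s.T2 ++ s.B2 := by
      conv_rhs => rw [← hsplit]
      simp
    have hnb2 : arcB2' (arcReplace xInB2 s) O =
        (((s.T2 ++ s.B2).takeWhile (fun r => decide (r ∈ O))).filter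
          (fun r => decide (r ∈ q0 :: s.B2))).length := by
      rw [hrep]; simp only [arcB2']; rw [hL]
    have hnt2 : arcT2' (arcReplace xInB2 s) O =
        (s.T2.dropLast.takeWhile (fun r => decide (r ∈ O))).length := by
      rw [hrep]; rfl
    have hphi : arcPhiAt (arcReplace xInB2 s) O (arcT s) - arcPhiAt s O (arcT s)
        = 3 * (arcB2' s O : ℤ) + 4 * (arcT2' s O : ℤ)
          - 3 * (arcB2' (arcReplace xInB2 s) O : ℤ) - 4 * (arcT2' (arcReplace xInB2 s) O : ℤ) := by
      have hb1 : arcB1' (arcReplace xInB2 s) O = arcB1' s O := by rw [hrep]; rfl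
      have ht1 : arcT1' (arcReplace xInB2 s) O = arcT1' s O := by rw [hrep]; rfl
      have hp : (arcReplace xInB2 s).p = s.p := by rw [hrep]
      simp only [arcPhiAt, hb1, ht1, hp]; ring
    have hval : arcPhiAt (arcReplace xInB2 s) O (arcT s) - arcPhiAt s O (arcT s)
        = if q0 ∈ s.T2.takeWhile (fun r => decide (r ∈ O)) then 1 else 0 := by
      rw [hphi, hnb2, hnt2]
      rcases hkey with ⟨hmem, hfil, htw⟩ | ⟨hmem, hfil, htw⟩
      · rw [if_pos hmem, hfil]
        simp only [arcB2', arcT2', topLen]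
        rw [htw]; push_cast; ring
      · rw [if_neg hmem, hfil]
        simp only [arcB2', arcT2', topLen]
        rw [htw]; push_cast; ring
    refine ⟨Or.inr ⟨q0, hsome, by rw [hrep], by rw [hrep]⟩, ?_, ?_, ?_⟩
    · rw [hval]; split <;> norm_num
    · intro q' hq'
      rw [hrep] at hq'
      exfalso
      have := congrArg List.length hq'
      simp at this
    · intro q' hq'
      rw [hrep] at hq'
      simp only [List.cons.injEq] at hq'
      obtain ⟨rfl, -⟩ := hq'
      exact ⟨fun h => by rw [hval, if_pos h], fun h => by rw [hval, if_neg h]⟩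
end

section
/- In the parallel execution of ARC and OPT, after phase P(0) (i.e., once ARC's cache is full with t₁ + t₂ = N): on an ARC miss, T₁ = T₁' and T₂ = T₂' cannot hold simultaneously; consequently, if T₁ = T₁' then the page demoted from T₂ to B₂ by REPLACE is not in T₂', and symmetrically, if T₂ = T₂' then the page demoted from T₁ to B₁ by REPLACE is not in T₁'. -/
namespace ArcLemD

lemma dropLast_append_toList (l : List Page) : l.dropLast ++ l.getLast?.toList = l := by
  rcases l.eq_nil_or_concat with rfl | ⟨L, b, rfl⟩ <;> simp [List.getLast?_concat]

lemma toList_length (l : List Page) :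
    l.dropLast.length + l.getLast?.toList.length = l.length := by
  rw [← List.length_append, dropLast_append_toList]

lemma toList_length_pos {l : List Page} (h : 0 < l.length) : l.getLast?.toList.length = 1 := by
  have h1 := toList_length l
  have h2 : l.dropLast.length = l.length - 1 := List.length_dropLast
  omega

lemma toList_subset (l : List Page) : l.getLast?.toList ⊆ l := by
  conv_rhs => rw [← dropLast_append_toList l]
  exact List.subset_append_right _ _

lemma coe_erase {x : Page} {l : List Page} (h : x ∈ l) :
    (l : Multiset Page) = {x} + (l.erase x : List Page) := by
  rw [Multiset.coe_eq_coe.2 (List.perm_cons_erase h), ← Multiset.cons_coe,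
    Multiset.singleton_add]

lemma coe_split (l : List Page) :
    (l : Multiset Page) = (l.dropLast : List Page) + (l.getLast?.toList : List Page) := by
  rw [Multiset.coe_add, dropLast_append_toList]

lemma nodup_of_perm {l₁ l₂ : List Page} (h : (l₁ : Multiset Page) = ↑l₂)
    (h₂ : l₂.Nodup) : l₁.Nodup :=
  ((Multiset.coe_eq_coe.mp h).nodup_iff).mpr h₂

lemma nodup_cons_sub {x : Page} {l₁ d dir : List Page}
    (hp : (l₁ : Multiset Page) = ↑(x :: d)) (hs : d.Sublist dir)
    (hnd : dir.Nodup) (hx : x ∉ dir) : l₁.Nodup :=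
  nodup_of_perm hp (List.nodup_cons.mpr ⟨fun h => hx (hs.subset h), List.Nodup.sublist hs hnd⟩)

/-- The invariant maintained by ARC (for `1 ≤ N`). -/
def Inv (N : ℕ) (s : ArcState) : Prop :=
  (s.T1 ++ s.T2 ++ s.B1 ++ s.B2).Nodup ∧
  s.T1.length + s.B1.length ≤ N ∧
  s.T1.length + s.T2.length + s.B1.length + s.B2.length ≤ 2 * N ∧
  s.T1.length + s.T2.length ≤ N ∧
  (s.B1.length + s.B2.length = 0 ∨ s.T1.length + s.T2.length = N) ∧
  s.p ≤ N

lemma init_inv (N : ℕ) : Inv N ArcState.init := by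
  simp [Inv, ArcState.init]

lemma nodup_parts {s : ArcState} (h : (s.T1 ++ s.T2 ++ s.B1 ++ s.B2).Nodup) :
    s.T1.Nodup ∧ s.T2.Nodup ∧ s.B1.Nodup ∧ s.B2.Nodup ∧
    s.T1.Disjoint s.T2 ∧ s.T1.Disjoint s.B1 ∧ s.T1.Disjoint s.B2 ∧
    s.T2.Disjoint s.B1 ∧ s.T2.Disjoint s.B2 ∧ s.B1.Disjoint s.B2 := by
  simp only [List.nodup_append', List.disjoint_append_right, List.disjoint_append_left] at h
  tauto

lemma arcReplace_pos {b : Bool} {t1 t2 b1 b2 : List Page} {p : ℕ}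
    (hc : 1 ≤ t1.length ∧ ((b = true ∧ t1.length = p) ∨ p < t1.length)) :
    arcReplace b ⟨t1, t2, b1, b2, p⟩ = ⟨t1.dropLast, t2, t1.getLast?.toList ++ b1, b2, p⟩ := by
  unfold arcReplace; rw [if_pos hc]

lemma arcReplace_neg {b : Bool} {t1 t2 b1 b2 : List Page} {p : ℕ}
    (hc : ¬(1 ≤ t1.length ∧ ((b = true ∧ t1.length = p) ∨ p < t1.length))) :
    arcReplace b ⟨t1, t2, b1, b2, p⟩ = ⟨t1, t2.dropLast, b1, t2.getLast?.toList ++ b2, p⟩ := by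
  unfold arcReplace; rw [if_neg hc]

lemma arcStep_key {N : ℕ} (hN : 1 ≤ N) {s : ArcState} (h : Inv N s) (x : Page) :
    Inv N (arcStep N s x) ∧
    min N (arcT s + if x ∈ s.T1 ∨ x ∈ s.T2 then 0 else 1) ≤ arcT (arcStep N s x) := by
  obtain ⟨t1, t2, b1, b2, pp⟩ := s
  unfold Inv at h ⊢
  unfold arcT
  dsimp only at h ⊢
  obtain ⟨hnd, h2, h3, h4, h5, h6⟩ := h
  obtain ⟨n1, n2, n3, n4, d12, d1b1, d1b2, d2b1, d2b2, db12⟩ := nodup_parts (s := ⟨t1, t2, b1, b2, pp⟩) hnd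
  by_cases hx : x ∈ t1 ∨ x ∈ t2
  · -- cache hit
    have hstep : arcStep N ⟨t1, t2, b1, b2, pp⟩ x = ⟨t1.erase x, x :: t2.erase x, b1, b2, pp⟩ := by
      unfold arcStep; dsimp only; rw [if_pos hx]
    rw [hstep, if_pos hx]
    rcases hx with hxt | hxt
    · have hx2 : x ∉ t2 := fun hm => d12 hxt hm
      have he1 : (t1.erase x).length = t1.length - 1 := List.length_erase_of_mem hxt
      have hp1 : 0 < t1.length := List.length_pos_of_mem hxt
      rw [List.erase_of_not_mem hx2]
      refine ⟨⟨?_, ?_, ?_, ?_, ?_, ?_⟩, ?_⟩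
      · refine nodup_of_perm ?_ hnd
        simp only [← Multiset.coe_add, ← Multiset.cons_coe, ← Multiset.singleton_add]
        rw [coe_erase hxt]; all_goals abel
      all_goals (first | omega | (dsimp only; omega) | (simp only [List.length_append, List.length_cons]; omega) | (dsimp only; simp only [List.length_append, List.length_cons]; omega))
    · have hx1 : x ∉ t1 := fun hm => d12 hm hxt
      have he2 : (t2.erase x).length = t2.length - 1 := List.length_erase_of_mem hxt
      have hp2 : 0 < t2.length := List.length_pos_of_mem hxt
      rw [List.erase_of_not_mem hx1]
      refine ⟨⟨?_, ?_, ?_, ?_, ?_, ?_⟩, ?_⟩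
      · refine nodup_of_perm ?_ hnd
        simp only [← Multiset.coe_add, ← Multiset.cons_coe, ← Multiset.singleton_add]
        rw [coe_erase hxt]; all_goals abel
      all_goals (first | omega | (dsimp only; omega) | (simp only [List.length_append, List.length_cons]; omega) | (dsimp only; simp only [List.length_append, List.length_cons]; omega))
  · have hxor := hx
    push_neg at hx
    obtain ⟨hx1, hx2⟩ := hx
    by_cases hb1 : x ∈ b1
    · -- history hit in B1
      have hb1pos : 0 < b1.length := List.length_pos_of_mem hb1
      have htN : t1.length + t2.length = N := by omega
      have hxgl : x ∉ t1.getLast?.toList := fun hm => d1b1 (toList_subset t1 hm) hb1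
      have heb : (b1.erase x).length = b1.length - 1 := List.length_erase_of_mem hb1
      rcases Decidable.em (1 ≤ t1.length ∧
          ((false = true ∧ t1.length = min (pp + 1) N) ∨ min (pp + 1) N < t1.length)) with hc | hc
      · have hc1 := hc.1
        have hstep : arcStep N ⟨t1, t2, b1, b2, pp⟩ x
            = ⟨t1.dropLast, x :: t2, t1.getLast?.toList ++ b1.erase x, b2, min (pp + 1) N⟩ := by
          unfold arcStep; dsimp only
          rw [if_neg hxor, if_pos hb1]
          try dsimp only
          rw [arcReplace_pos hc]
          try dsimp only
          rw [List.erase_append_right _ hxgl]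
        have hgl1 : t1.getLast?.toList.length = 1 := toList_length_pos (by omega)
        rw [hstep, if_neg hxor]
        refine ⟨⟨?_, ?_, ?_, ?_, ?_, ?_⟩, ?_⟩
        · refine nodup_of_perm ?_ hnd
          simp only [← Multiset.coe_add, ← Multiset.cons_coe, ← Multiset.singleton_add]
          rw [coe_erase hb1, coe_split t1]; all_goals abel
        all_goals (first | omega | (dsimp only; omega) | (simp only [List.length_append, List.length_cons, List.length_dropLast]; omega) | (dsimp only; simp only [List.length_append, List.length_cons, List.length_dropLast]; omega))
      · have ht2ne : t2 ≠ [] := by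
          intro he
          have hl0 : t2.length = 0 := by rw [he]; rfl
          omega
        have ht2pos : 0 < t2.length := List.length_pos_iff.mpr ht2ne
        have hgl2 : t2.getLast?.toList.length = 1 := toList_length_pos ht2pos
        have hstep : arcStep N ⟨t1, t2, b1, b2, pp⟩ x
            = ⟨t1, x :: t2.dropLast, b1.erase x, t2.getLast?.toList ++ b2, min (pp + 1) N⟩ := by
          unfold arcStep; dsimp only
          rw [if_neg hxor, if_pos hb1]
          try dsimp only
          rw [arcReplace_neg hc]
        rw [hstep, if_neg hxor]
        refine ⟨⟨?_, ?_, ?_, ?_, ?_, ?_⟩, ?_⟩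
        · refine nodup_of_perm ?_ hnd
          simp only [← Multiset.coe_add, ← Multiset.cons_coe, ← Multiset.singleton_add]
          rw [coe_erase hb1, coe_split t2]; all_goals abel
        all_goals (first | omega | (dsimp only; omega) | (simp only [List.length_append, List.length_cons, List.length_dropLast]; omega) | (dsimp only; simp only [List.length_append, List.length_cons, List.length_dropLast]; omega))
    · by_cases hb2 : x ∈ b2
      · -- history hit in B2
        have hb2pos : 0 < b2.length := List.length_pos_of_mem hb2
        have htN : t1.length + t2.length = N := by omega
        have hxgl2 : x ∉ t2.getLast?.toList := fun hm => d2b2 (toList_subset t2 hm) hb2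
        have heb : (b2.erase x).length = b2.length - 1 := List.length_erase_of_mem hb2
        rcases Decidable.em (1 ≤ t1.length ∧
            ((true = true ∧ t1.length = pp - 1) ∨ pp - 1 < t1.length)) with hc | hc
        · have hc1 := hc.1
          have hstep : arcStep N ⟨t1, t2, b1, b2, pp⟩ x
              = ⟨t1.dropLast, x :: t2, t1.getLast?.toList ++ b1, b2.erase x, pp - 1⟩ := by
            unfold arcStep; dsimp only
            rw [if_neg hxor, if_neg hb1, if_pos hb2]
            try dsimp only
            rw [arcReplace_pos hc]
          have hgl1 : t1.getLast?.toList.length = 1 := toList_length_pos (by omega)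
          rw [hstep, if_neg hxor]
          refine ⟨⟨?_, ?_, ?_, ?_, ?_, ?_⟩, ?_⟩
          · refine nodup_of_perm ?_ hnd
            simp only [← Multiset.coe_add, ← Multiset.cons_coe, ← Multiset.singleton_add]
            rw [coe_erase hb2, coe_split t1]; all_goals abel
          all_goals (first | omega | (dsimp only; omega) | (simp only [List.length_append, List.length_cons, List.length_dropLast]; omega) | (dsimp only; simp only [List.length_append, List.length_cons, List.length_dropLast]; omega))
        · have ht2ne : t2 ≠ [] := by
            intro he
            have hl0 : t2.length = 0 := by rw [he]; rfl
            exact hc ⟨by omega, Or.inr (by omega)⟩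
          have ht2pos : 0 < t2.length := List.length_pos_iff.mpr ht2ne
          have hgl2 : t2.getLast?.toList.length = 1 := toList_length_pos ht2pos
          have hstep : arcStep N ⟨t1, t2, b1, b2, pp⟩ x
              = ⟨t1, x :: t2.dropLast, b1, t2.getLast?.toList ++ b2.erase x, pp - 1⟩ := by
            unfold arcStep; dsimp only
            rw [if_neg hxor, if_neg hb1, if_pos hb2]
            try dsimp only
            rw [arcReplace_neg hc]
            try dsimp only
            rw [List.erase_append_right _ hxgl2]
          rw [hstep, if_neg hxor]
          refine ⟨⟨?_, ?_, ?_, ?_, ?_, ?_⟩, ?_⟩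
          · refine nodup_of_perm ?_ hnd
            simp only [← Multiset.coe_add, ← Multiset.cons_coe, ← Multiset.singleton_add]
            rw [coe_erase hb2, coe_split t2]; all_goals abel
          all_goals (first | omega | (dsimp only; omega) | (simp only [List.length_append, List.length_cons, List.length_dropLast]; omega) | (dsimp only; simp only [List.length_append, List.length_cons, List.length_dropLast]; omega))
      · -- full miss
        have hxdir : x ∉ t1 ++ t2 ++ b1 ++ b2 := by simp [hx1, hx2, hb1, hb2]
        by_cases hd1 : t1.length + b1.length = N
        · by_cases hd1a : t1.length < N
          · -- |L1| = N, |T1| < N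
            have hb1pos : 0 < b1.length := by omega
            have htN : t1.length + t2.length = N := by omega
            rcases Decidable.em (1 ≤ t1.length ∧
                ((false = true ∧ t1.length = pp) ∨ pp < t1.length)) with hc | hc
            · have hc1 := hc.1
              have hstep : arcStep N ⟨t1, t2, b1, b2, pp⟩ x
                  = ⟨x :: t1.dropLast, t2, t1.getLast?.toList ++ b1.dropLast, b2, pp⟩ := by
                unfold arcStep; dsimp only
                rw [if_neg hxor, if_neg hb1, if_neg hb2]
                try dsimp only
                rw [if_pos hd1, if_pos hd1a]
                try dsimp only
                rw [arcReplace_pos hc]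
              have hgl1 : t1.getLast?.toList.length = 1 := toList_length_pos (by omega)
              rw [hstep, if_neg hxor]
              refine ⟨⟨?_, ?_, ?_, ?_, ?_, ?_⟩, ?_⟩
              · refine nodup_cons_sub (d := t1 ++ t2 ++ b1.dropLast ++ b2) ?_ ?_ hnd hxdir
                · simp only [← Multiset.coe_add, ← Multiset.cons_coe, ← Multiset.singleton_add]
                  rw [coe_split t1]; all_goals abel
                · exact (((List.Sublist.refl t1).append (List.Sublist.refl t2)).append
                    (List.dropLast_sublist b1)).append (List.Sublist.refl b2)
              all_goals (first | omega | (dsimp only; omega) | (simp only [List.length_append, List.length_cons, List.length_dropLast]; omega) | (dsimp only; simp only [List.length_append, List.length_cons, List.length_dropLast]; omega))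
            · have ht2ne : t2 ≠ [] := by
                intro he
                have hl0 : t2.length = 0 := by rw [he]; rfl
                omega
              have ht2pos : 0 < t2.length := List.length_pos_iff.mpr ht2ne
              have hgl2 : t2.getLast?.toList.length = 1 := toList_length_pos ht2pos
              have hstep : arcStep N ⟨t1, t2, b1, b2, pp⟩ x
                  = ⟨x :: t1, t2.dropLast, b1.dropLast, t2.getLast?.toList ++ b2, pp⟩ := by
                unfold arcStep; dsimp only
                rw [if_neg hxor, if_neg hb1, if_neg hb2]
                try dsimp only
                rw [if_pos hd1, if_pos hd1a]
                try dsimp only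
                rw [arcReplace_neg hc]
              rw [hstep, if_neg hxor]
              refine ⟨⟨?_, ?_, ?_, ?_, ?_, ?_⟩, ?_⟩
              · refine nodup_cons_sub (d := t1 ++ t2 ++ b1.dropLast ++ b2) ?_ ?_ hnd hxdir
                · simp only [← Multiset.coe_add, ← Multiset.cons_coe, ← Multiset.singleton_add]
                  rw [coe_split t2]; all_goals abel
                · exact (((List.Sublist.refl t1).append (List.Sublist.refl t2)).append
                    (List.dropLast_sublist b1)).append (List.Sublist.refl b2)
              all_goals (first | omega | (dsimp only; omega) | (simp only [List.length_append, List.length_cons, List.length_dropLast]; omega) | (dsimp only; simp only [List.length_append, List.length_cons, List.length_dropLast]; omega))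
          · -- |T1| = N
            have ht1N : t1.length = N := by omega
            have hstep : arcStep N ⟨t1, t2, b1, b2, pp⟩ x
                = ⟨x :: t1.dropLast, t2, b1, b2, pp⟩ := by
              unfold arcStep; dsimp only
              rw [if_neg hxor, if_neg hb1, if_neg hb2]
              try dsimp only
              rw [if_pos hd1, if_neg hd1a]
            rw [hstep, if_neg hxor]
            refine ⟨⟨?_, ?_, ?_, ?_, ?_, ?_⟩, ?_⟩
            · refine nodup_cons_sub (d := t1.dropLast ++ t2 ++ b1 ++ b2) ?_ ?_ hnd hxdir
              · simp only [← Multiset.coe_add, ← Multiset.cons_coe, ← Multiset.singleton_add]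
                abel
              · exact (((List.dropLast_sublist t1).append (List.Sublist.refl t2)).append
                  (List.Sublist.refl b1)).append (List.Sublist.refl b2)
            all_goals (first | omega | (dsimp only; omega) | (simp only [List.length_append, List.length_cons, List.length_dropLast]; omega) | (dsimp only; simp only [List.length_append, List.length_cons, List.length_dropLast]; omega))
        · by_cases hd2 : t1.length + b1.length < N ∧
              N ≤ t1.length + t2.length + b1.length + b2.length
          · by_cases hd2n : t1.length + t2.length + b1.length + b2.length = 2 * N
            · have htN : t1.length + t2.length = N := by omega
              have hb2pos : 0 < b2.length := by omega
              rcases Decidable.em (1 ≤ t1.length ∧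
                  ((false = true ∧ t1.length = pp) ∨ pp < t1.length)) with hc | hc
              · have hc1 := hc.1
                have hstep : arcStep N ⟨t1, t2, b1, b2, pp⟩ x
                    = ⟨x :: t1.dropLast, t2, t1.getLast?.toList ++ b1, b2.dropLast, pp⟩ := by
                  unfold arcStep; dsimp only
                  rw [if_neg hxor, if_neg hb1, if_neg hb2]
                  try dsimp only
                  rw [if_neg hd1, if_pos hd2, if_pos hd2n]
                  try dsimp only
                  rw [arcReplace_pos hc]
                have hgl1 : t1.getLast?.toList.length = 1 := toList_length_pos (by omega)
                rw [hstep, if_neg hxor]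
                refine ⟨⟨?_, ?_, ?_, ?_, ?_, ?_⟩, ?_⟩
                · refine nodup_cons_sub (d := t1 ++ t2 ++ b1 ++ b2.dropLast) ?_ ?_ hnd hxdir
                  · simp only [← Multiset.coe_add, ← Multiset.cons_coe, ← Multiset.singleton_add]
                    rw [coe_split t1]; all_goals abel
                  · exact (((List.Sublist.refl t1).append (List.Sublist.refl t2)).append
                      (List.Sublist.refl b1)).append (List.dropLast_sublist b2)
                all_goals (first | omega | (dsimp only; omega) | (simp only [List.length_append, List.length_cons, List.length_dropLast]; omega) | (dsimp only; simp only [List.length_append, List.length_cons, List.length_dropLast]; omega))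
              · have ht2ne : t2 ≠ [] := by
                  intro he
                  have hl0 : t2.length = 0 := by rw [he]; rfl
                  omega
                have ht2pos : 0 < t2.length := List.length_pos_iff.mpr ht2ne
                have hgl2 : t2.getLast?.toList.length = 1 := toList_length_pos ht2pos
                have hstep : arcStep N ⟨t1, t2, b1, b2, pp⟩ x
                    = ⟨x :: t1, t2.dropLast, b1, t2.getLast?.toList ++ b2.dropLast, pp⟩ := by
                  unfold arcStep; dsimp only
                  rw [if_neg hxor, if_neg hb1, if_neg hb2]
                  try dsimp only
                  rw [if_neg hd1, if_pos hd2, if_pos hd2n]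
                  try dsimp only
                  rw [arcReplace_neg hc]
                rw [hstep, if_neg hxor]
                refine ⟨⟨?_, ?_, ?_, ?_, ?_, ?_⟩, ?_⟩
                · refine nodup_cons_sub (d := t1 ++ t2 ++ b1 ++ b2.dropLast) ?_ ?_ hnd hxdir
                  · simp only [← Multiset.coe_add, ← Multiset.cons_coe, ← Multiset.singleton_add]
                    rw [coe_split t2]; all_goals abel
                  · exact (((List.Sublist.refl t1).append (List.Sublist.refl t2)).append
                      (List.Sublist.refl b1)).append (List.dropLast_sublist b2)
                all_goals (first | omega | (dsimp only; omega) | (simp only [List.length_append, List.length_cons, List.length_dropLast]; omega) | (dsimp only; simp only [List.length_append, List.length_cons, List.length_dropLast]; omega))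
            · have htN : t1.length + t2.length = N := by omega
              rcases Decidable.em (1 ≤ t1.length ∧
                  ((false = true ∧ t1.length = pp) ∨ pp < t1.length)) with hc | hc
              · have hc1 := hc.1
                have hstep : arcStep N ⟨t1, t2, b1, b2, pp⟩ x
                    = ⟨x :: t1.dropLast, t2, t1.getLast?.toList ++ b1, b2, pp⟩ := by
                  unfold arcStep; dsimp only
                  rw [if_neg hxor, if_neg hb1, if_neg hb2]
                  try dsimp only
                  rw [if_neg hd1, if_pos hd2, if_neg hd2n]
                  try dsimp only
                  rw [arcReplace_pos hc]
                have hgl1 : t1.getLast?.toList.length = 1 := toList_length_pos (by omega)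
                rw [hstep, if_neg hxor]
                refine ⟨⟨?_, ?_, ?_, ?_, ?_, ?_⟩, ?_⟩
                · refine nodup_cons_sub (d := t1 ++ t2 ++ b1 ++ b2) ?_ ?_ hnd hxdir
                  · simp only [← Multiset.coe_add, ← Multiset.cons_coe, ← Multiset.singleton_add]
                    rw [coe_split t1]; all_goals abel
                  · exact List.Sublist.refl _
                all_goals (first | omega | (dsimp only; omega) | (simp only [List.length_append, List.length_cons, List.length_dropLast]; omega) | (dsimp only; simp only [List.length_append, List.length_cons, List.length_dropLast]; omega))
              · have ht2ne : t2 ≠ [] := by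
                  intro he
                  have hl0 : t2.length = 0 := by rw [he]; rfl
                  omega
                have ht2pos : 0 < t2.length := List.length_pos_iff.mpr ht2ne
                have hgl2 : t2.getLast?.toList.length = 1 := toList_length_pos ht2pos
                have hstep : arcStep N ⟨t1, t2, b1, b2, pp⟩ x
                    = ⟨x :: t1, t2.dropLast, b1, t2.getLast?.toList ++ b2, pp⟩ := by
                  unfold arcStep; dsimp only
                  rw [if_neg hxor, if_neg hb1, if_neg hb2]
                  try dsimp only
                  rw [if_neg hd1, if_pos hd2, if_neg hd2n]
                  try dsimp only
                  rw [arcReplace_neg hc]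
                rw [hstep, if_neg hxor]
                refine ⟨⟨?_, ?_, ?_, ?_, ?_, ?_⟩, ?_⟩
                · refine nodup_cons_sub (d := t1 ++ t2 ++ b1 ++ b2) ?_ ?_ hnd hxdir
                  · simp only [← Multiset.coe_add, ← Multiset.cons_coe, ← Multiset.singleton_add]
                    rw [coe_split t2]; all_goals abel
                  · exact List.Sublist.refl _
                all_goals (first | omega | (dsimp only; omega) | (simp only [List.length_append, List.length_cons, List.length_dropLast]; omega) | (dsimp only; simp only [List.length_append, List.length_cons, List.length_dropLast]; omega))
          · -- directory not full enough: plain insert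
            have hstep : arcStep N ⟨t1, t2, b1, b2, pp⟩ x
                = ⟨x :: t1, t2, b1, b2, pp⟩ := by
              unfold arcStep; dsimp only
              rw [if_neg hxor, if_neg hb1, if_neg hb2]
              try dsimp only
              rw [if_neg hd1, if_neg hd2]
            rw [hstep, if_neg hxor]
            refine ⟨⟨?_, ?_, ?_, ?_, ?_, ?_⟩, ?_⟩
            · refine nodup_cons_sub (d := t1 ++ t2 ++ b1 ++ b2) ?_ ?_ hnd hxdir
              · simp only [← Multiset.coe_add, ← Multiset.cons_coe, ← Multiset.singleton_add]
                abel
              · exact List.Sublist.refl _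
            all_goals (first | omega | (dsimp only; omega) | (simp only [List.length_append, List.length_cons, List.length_dropLast]; omega) | (dsimp only; simp only [List.length_append, List.length_cons, List.length_dropLast]; omega))

lemma arcRun_key {N : ℕ} (hN : 1 ≤ N) :
    ∀ (l : List Page) (s : ArcState), Inv N s →
      Inv N (arcRun N s l) ∧
      min N (arcT s + arcCost N s l) ≤ arcT (arcRun N s l)
  | [], s, h => ⟨h, by simp [arcRun, arcCost]⟩
  | x :: xs, s, h => by
    obtain ⟨hinv, ht⟩ := arcStep_key hN h x
    obtain ⟨ih1, ih2⟩ := arcRun_key hN xs (arcStep N s x) hinv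
    refine ⟨ih1, ?_⟩
    show min N (arcT s + ((if x ∈ s.T1 ∨ x ∈ s.T2 then 0 else 1) + arcCost N (arcStep N s x) xs))
      ≤ arcT (arcRun N (arcStep N s x) xs)
    omega

end ArcLemD

/-- Lemma `lem:d`. In the parallel execution of ARC and OPT,
after phase `P(0)` (once ARC has incurred at least `N` faults, so its cache is
full), on an ARC miss `T1 = T1'` and `T2 = T2'` cannot hold simultaneously;
consequently, if `T1 = T1'` then the page `LRU(T2)` demoted from `T2` to `B2`
by REPLACE is not in `T2'`, and symmetrically, if `T2 = T2'` then the page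
`LRU(T1)` demoted from `T1` to `B1` by REPLACE is not in `T1'` (primed
quantities w.r.t. OPT's cache `C (j+1)`). -/
theorem arc_lemma_d (N : ℕ) (σ : List Page) (C : ℕ → Finset Page)
    (hC : OptExec N σ C) (hCopt : optFaults σ C = optCost N σ)
    (j : ℕ) (hj : j < σ.length)
    (hphase : N ≤ arcCost N ArcState.init (σ.take j))
    (s : ArcState) (hs : s = arcRun N ArcState.init (σ.take j))
    (hmiss : σ.getD j 0 ∉ s.T1 ∧ σ.getD j 0 ∉ s.T2) :
    ¬(s.T1.takeWhile (fun r => decide (r ∈ C (j + 1))) = s.T1 ∧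
        s.T2.takeWhile (fun r => decide (r ∈ C (j + 1))) = s.T2) ∧
    (s.T1.takeWhile (fun r => decide (r ∈ C (j + 1))) = s.T1 →
      ∀ q, s.T2.getLast? = some q →
        q ∉ s.T2.takeWhile (fun r => decide (r ∈ C (j + 1)))) ∧
    (s.T2.takeWhile (fun r => decide (r ∈ C (j + 1))) = s.T2 →
      ∀ q, s.T1.getLast? = some q →
        q ∉ s.T1.takeWhile (fun r => decide (r ∈ C (j + 1)))) := by
  classical
  obtain ⟨h0, hcard, hreq⟩ := hC
  obtain ⟨hxin, -, -⟩ := hreq j hj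
  have hN : 1 ≤ N := by
    rcases Nat.eq_zero_or_pos N with hz | h
    · exfalso
      have hcc := hcard (j + 1)
      have hce : C (j + 1) = ∅ := Finset.card_eq_zero.mp (by omega)
      rw [hce] at hxin
      exact absurd hxin (Finset.notMem_empty _)
    · exact h
  obtain ⟨hinv, ht⟩ := ArcLemD.arcRun_key hN (σ.take j) ArcState.init (ArcLemD.init_inv N)
  rw [← hs] at hinv ht
  have hi0 : arcT ArcState.init = 0 := rfl
  have htN : N ≤ s.T1.length + s.T2.length := by
    have harc : arcT s = s.T1.length + s.T2.length := rfl
    omega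
  obtain ⟨n1, n2, n3, n4, d12, _⟩ := ArcLemD.nodup_parts hinv.1
  have key : ¬(s.T1.takeWhile (fun r => decide (r ∈ C (j + 1))) = s.T1 ∧
      s.T2.takeWhile (fun r => decide (r ∈ C (j + 1))) = s.T2) := by
    rintro ⟨h1, h2⟩
    rw [List.takeWhile_eq_self_iff] at h1 h2
    simp only [decide_eq_true_eq] at h1 h2
    have hsub : (σ.getD j 0 :: (s.T1 ++ s.T2)).toFinset ⊆ C (j + 1) := by
      intro a ha
      simp only [List.mem_toFinset, List.mem_cons, List.mem_append] at ha
      rcases ha with rfl | ha | ha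
      · exact hxin
      · exact h1 a ha
      · exact h2 a ha
    have hnd : (σ.getD j 0 :: (s.T1 ++ s.T2)).Nodup := by
      rw [List.nodup_cons, List.nodup_append']
      refine ⟨fun hm => ?_, n1, n2, d12⟩
      rcases List.mem_append.mp hm with hm | hm
      exacts [hmiss.1 hm, hmiss.2 hm]
    have hc1 := Finset.card_le_card hsub
    rw [List.toFinset_card_of_nodup hnd] at hc1
    have hc2 := hcard (j + 1)
    simp only [List.length_cons, List.length_append] at hc1
    omega
  refine ⟨key, ?_, ?_⟩
  · intro h1 q hq hqmem
    have h2 : s.T2.takeWhile (fun r => decide (r ∈ C (j + 1))) ≠ s.T2 :=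
      fun h2 => key ⟨h1, h2⟩
    have hsplit := List.takeWhile_append_dropWhile (p := fun r => decide (r ∈ C (j + 1))) (l := s.T2)
    have hdw : s.T2.dropWhile (fun r => decide (r ∈ C (j + 1))) ≠ [] := by
      intro hnil
      rw [hnil, List.append_nil] at hsplit
      exact h2 hsplit
    have hq' : q ∈ s.T2.dropWhile (fun r => decide (r ∈ C (j + 1))) := by
      have hgl : s.T2.getLast? =
          (s.T2.dropWhile (fun r => decide (r ∈ C (j + 1)))).getLast? := by
        conv_lhs => rw [← hsplit]
        rw [List.getLast?_append, List.getLast?_eq_getLast hdw]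
        simp
      rw [hgl, List.getLast?_eq_getLast hdw, Option.some.injEq] at hq
      rw [← hq]
      exact List.getLast_mem hdw
    have hdisj : (s.T2.takeWhile (fun r => decide (r ∈ C (j + 1)))).Disjoint
        (s.T2.dropWhile (fun r => decide (r ∈ C (j + 1)))) := by
      have hnn := n2
      rw [← hsplit, List.nodup_append'] at hnn
      exact hnn.2.2
    exact hdisj hqmem hq'
  · intro h1 q hq hqmem
    have h2 : s.T1.takeWhile (fun r => decide (r ∈ C (j + 1))) ≠ s.T1 :=
      fun h2 => key ⟨h2, h1⟩
    have hsplit := List.takeWhile_append_dropWhile (p := fun r => decide (r ∈ C (j + 1))) (l := s.T1)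
    have hdw : s.T1.dropWhile (fun r => decide (r ∈ C (j + 1))) ≠ [] := by
      intro hnil
      rw [hnil, List.append_nil] at hsplit
      exact h2 hsplit
    have hq' : q ∈ s.T1.dropWhile (fun r => decide (r ∈ C (j + 1))) := by
      have hgl : s.T1.getLast? =
          (s.T1.dropWhile (fun r => decide (r ∈ C (j + 1)))).getLast? := by
        conv_lhs => rw [← hsplit]
        rw [List.getLast?_append, List.getLast?_eq_getLast hdw]
        simp
      rw [hgl, List.getLast?_eq_getLast hdw, Option.some.injEq] at hq
      rw [← hq]
      exact List.getLast_mem hdw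
    have hdisj : (s.T1.takeWhile (fun r => decide (r ∈ C (j + 1)))).Disjoint
        (s.T1.dropWhile (fun r => decide (r ∈ C (j + 1)))) := by
      have hnn := n1
      rw [← hsplit, List.nodup_append'] at hnn
      exact hnn.2.2
    exact hdisj hqmem hq'
end

section
/- In the parallel execution of ARC and OPT (with OPT serving each request before ARC), for every request σ_j in any phase P(i) with i > 0, the per-request inequality C_arc(σ_j) + ΔΦ ≤ 4N · C_opt(σ_j) holds, where C_arc(σ_j) and C_opt(σ_j) are 1 or 0 according to whether ARC (respectively OPT) faults on σ_j, and ΔΦ is the total change in the potential Φ = p − [(b₁'−t) + 2(t₁'−t) + 3(b₂'−t) + 4(t₂'−t)] during the processing of σ_j by both algorithms. -/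
namespace TopLen

variable {O : Finset Page} {x : Page} {X B : List Page}

lemma topLen_nil : topLen [] O = 0 := rfl

lemma topLen_cons_mem (h : x ∈ O) : topLen (x :: X) O = topLen X O + 1 := by
  simp [topLen, List.takeWhile_cons, h]

lemma topLen_cons_not_mem (h : x ∉ O) : topLen (x :: X) O = 0 := by
  simp [topLen, List.takeWhile_cons, h]

lemma topLen_le_length : topLen X O ≤ X.length :=
  List.IsPrefix.length_le (List.takeWhile_prefix _)

lemma takeWhile_eq_self_iff_topLen :
    X.takeWhile (fun q => decide (q ∈ O)) = X ↔ topLen X O = X.length := by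
  constructor
  · intro h; rw [topLen, h]
  · intro h; exact (List.takeWhile_prefix _).eq_of_length h

lemma topLen_eq_length_iff : topLen X O = X.length ↔ ∀ q ∈ X, q ∈ O := by
  rw [← takeWhile_eq_self_iff_topLen, List.takeWhile_eq_self_iff]
  simp

lemma mem_of_mem_takeWhile (h : x ∈ X.takeWhile (fun q => decide (q ∈ O))) : x ∈ O := by
  have := List.mem_takeWhile_imp h
  simpa using this

lemma takeWhile_cons_of_mem (ha : x ∈ O) :
    (x :: X).takeWhile (fun q => decide (q ∈ O))
      = x :: X.takeWhile (fun q => decide (q ∈ O)) := by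
  simp [List.takeWhile_cons, ha]

lemma takeWhile_cons_of_not_mem (ha : x ∉ O) :
    (x :: X).takeWhile (fun q => decide (q ∈ O)) = [] := by
  simp [List.takeWhile_cons, ha]

lemma topLen_dropLast : topLen X.dropLast O = min (topLen X O) (X.length - 1) := by
  induction X with
  | nil => simp [topLen]
  | cons a tl ih =>
    cases tl with
    | nil =>
      by_cases ha : a ∈ O <;>
        simp [topLen, List.takeWhile_cons, ha]
    | cons b tl2 =>
      by_cases ha : a ∈ O
      · have hdl : (a :: b :: tl2).dropLast = a :: (b :: tl2).dropLast := rfl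
        rw [hdl, topLen_cons_mem ha, topLen_cons_mem ha, ih]
        simp only [List.length_cons]
        omega
      · have hdl : (a :: b :: tl2).dropLast = a :: (b :: tl2).dropLast := rfl
        rw [hdl, topLen_cons_not_mem ha, topLen_cons_not_mem ha]
        simp

lemma topLen_erase_of_mem_takeWhile
    (h : x ∈ X.takeWhile (fun q => decide (q ∈ O))) :
    topLen (X.erase x) O = topLen X O - 1 := by
  induction X with
  | nil => simp at h
  | cons a tl ih =>
    by_cases ha : a ∈ O
    · rw [takeWhile_cons_of_mem ha, List.mem_cons] at h
      by_cases hax : x = a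
      · subst hax
        rw [List.erase_cons_head, topLen_cons_mem ha]
        omega
      · have hmem : x ∈ tl.takeWhile (fun q => decide (q ∈ O)) := by tauto
        rw [List.erase_cons_tail (by simp [Ne.symm hax] : ¬(a == x) = true),
          topLen_cons_mem ha, topLen_cons_mem ha, ih hmem]
        have h1 : 1 ≤ topLen tl O := List.length_pos_of_mem hmem
        omega
    · rw [takeWhile_cons_of_not_mem ha] at h
      simp at h

lemma topLen_erase_of_not_mem_takeWhile (hxO : x ∈ O)
    (h : x ∉ X.takeWhile (fun q => decide (q ∈ O))) :
    topLen (X.erase x) O = topLen X O := by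
  induction X with
  | nil => simp
  | cons a tl ih =>
    by_cases ha : a ∈ O
    · rw [takeWhile_cons_of_mem ha, List.mem_cons] at h
      push_neg at h
      obtain ⟨hxa, hxtl⟩ := h
      rw [List.erase_cons_tail (by simp [Ne.symm hxa] : ¬(a == x) = true),
        topLen_cons_mem ha, topLen_cons_mem ha, ih hxtl]
    · have hxa : x ≠ a := fun he => ha (he ▸ hxO)
      rw [List.erase_cons_tail (by simp [Ne.symm hxa] : ¬(a == x) = true),
        topLen_cons_not_mem ha, topLen_cons_not_mem ha]

lemma gap_lemma (hx : x ∈ X) (hxO : x ∈ O)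
    (hnt : x ∉ X.takeWhile (fun q => decide (q ∈ O))) :
    topLen X O + 2 ≤ X.length := by
  induction X with
  | nil => simp at hx
  | cons a tl ih =>
    by_cases ha : a ∈ O
    · rw [takeWhile_cons_of_mem ha, List.mem_cons] at hnt
      push_neg at hnt
      obtain ⟨hxa, hxtl⟩ := hnt
      have hxtl' : x ∈ tl := by
        rcases List.mem_cons.1 hx with h | h
        · exact absurd h hxa
        · exact h
      have := ih hxtl' hxtl
      rw [topLen_cons_mem ha]
      simp only [List.length_cons]
      omega
    · have hxa : x ≠ a := fun he => ha (he ▸ hxO)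
      have hxtl : x ∈ tl := by
        rcases List.mem_cons.1 hx with h | h
        · exact absurd h hxa
        · exact h
      rw [topLen_cons_not_mem ha]
      have := List.length_pos_of_mem hxtl
      simp only [List.length_cons]
      omega

lemma topLen_append :
    topLen (X ++ B) O =
      if topLen X O = X.length then X.length + topLen B O else topLen X O := by
  rw [topLen, List.takeWhile_append]
  split
  · next h => simp [topLen, h, List.length_append]
  · next h => rw [topLen]; rw [if_neg h]

lemma getLast_mem_O (h : topLen X O = X.length) (hne : X ≠ []) :
    X.getLast hne ∈ O :=
  (topLen_eq_length_iff.1 h) _ (List.getLast_mem hne)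

lemma topLen_erase_ge (hxO : x ∈ O) :
    topLen X O - 1 ≤ topLen (X.erase x) O := by
  by_cases h : x ∈ X.takeWhile (fun q => decide (q ∈ O))
  · rw [topLen_erase_of_mem_takeWhile h]
  · rw [topLen_erase_of_not_mem_takeWhile hxO h]; omega

lemma topLen_erase_le (hxO : x ∈ O) :
    topLen (X.erase x) O ≤ topLen X O := by
  by_cases h : x ∈ X.takeWhile (fun q => decide (q ∈ O))
  · rw [topLen_erase_of_mem_takeWhile h]; omega
  · rw [topLen_erase_of_not_mem_takeWhile hxO h]

lemma length_erase_of_mem' (h : x ∈ X) : (X.erase x).length = X.length - 1 :=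
  List.length_erase_of_mem h

end TopLen

namespace TopLen

variable {O : Finset Page} {x : Page} {X B : List Page} {w1 w2 : ℕ}

/-- Weighted top value of a pair of lists: `w1·τX + (if whole X in O) w2·τB`. -/
def gw (w1 w2 : ℕ) (X B : List Page) (O : Finset Page) : ℕ :=
  w1 * topLen X O + if topLen X O = X.length then w2 * topLen B O else 0

lemma gw_cons (hx : x ∈ O) : gw w1 w2 (x :: X) B O = gw w1 w2 X B O + w1 := by
  rw [gw, gw, topLen_cons_mem hx]
  simp only [List.length_cons, Nat.add_right_cancel_iff]
  ring

lemma gw_ge (h : topLen X O = X.length) : w2 * topLen B O ≤ gw w1 w2 X B O := by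
  rw [gw, if_pos h]; omega

lemma gw_head (hx : x ∈ O) : w1 ≤ gw w1 w2 (x :: X) B O := by
  rw [gw_cons hx]; omega

/-- Demotion of the LRU of `X` onto the head of `B` costs at most `1`
     (for weights with `w1 ≤ w2 + 1`). -/
lemma gw_demote (hne : X ≠ []) (hw : w1 ≤ w2 + 1) :
    gw w1 w2 X B O ≤ gw w1 w2 X.dropLast (X.getLast hne :: B) O + 1 := by
  by_cases hα : topLen X O = X.length
  · have hXlen : 1 ≤ X.length := List.length_pos_of_ne_nil hne
    have hlast : X.getLast hne ∈ O := getLast_mem_O hα hne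
    have h1 : topLen X.dropLast O = X.length - 1 := by
      rw [topLen_dropLast, hα]; omega
    have h2 : X.dropLast.length = X.length - 1 := List.length_dropLast
    obtain ⟨n, hn⟩ : ∃ n, X.length = n + 1 := ⟨X.length - 1, by omega⟩
    rw [gw, gw, h1, h2, hn, topLen_cons_mem hlast]
    rw [hα, hn]
    simp only [Nat.add_sub_cancel, eq_self_iff_true, if_true]
    have e1 : w1 * (n + 1) = w1 * n + w1 := by ring
    have e2 : w2 * (topLen B O + 1) = w2 * topLen B O + w2 := by ring
    rw [e1, e2]
    omega
  · have ha : topLen X O ≤ X.length - 1 := by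
      have := topLen_le_length (X := X) (O := O)
      omega
    have h1 : topLen X.dropLast O = topLen X O := by
      rw [topLen_dropLast]; omega
    rw [gw, gw, h1, if_neg hα]
    omega

/-- If the prefix does not exhaust `X`, demotion (with arbitrary new `B`) is free. -/
lemma gw_demote0 {B' : List Page} (hα : topLen X O ≠ X.length) :
    gw w1 w2 X B O ≤ gw w1 w2 X.dropLast B' O := by
  have ha : topLen X O ≤ X.length - 1 := by
    have := topLen_le_length (X := X) (O := O)
    omega
  have h1 : topLen X.dropLast O = topLen X O := by
    rw [topLen_dropLast]; omega
  rw [gw, gw, h1, if_neg hα]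
  omega

/-- Dropping the LRU of `B` is free provided the `B`-prefix is proper whenever counted. -/
lemma gw_dropB (h : topLen X O = X.length → topLen B O < B.length) :
    gw w1 w2 X B O ≤ gw w1 w2 X B.dropLast O := by
  by_cases hα : topLen X O = X.length
  · have h1 : topLen B.dropLast O = topLen B O := by
      rw [topLen_dropLast]
      have := h hα
      omega
    rw [gw, gw, h1]
  · rw [gw, gw, if_neg hα, if_neg hα]

/-- Erasing an element of `O` from `B` costs at most `w2`. -/
lemma gw_eraseB (hx : x ∈ O) :
    gw w1 w2 X B O ≤ gw w1 w2 X (B.erase x) O + w2 := by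
  by_cases hα : topLen X O = X.length
  · rw [gw, gw, if_pos hα, if_pos hα]
    have := topLen_erase_ge (X := B) hx
    have h2 : w2 * topLen B O ≤ w2 * topLen (B.erase x) O + w2 := by
      have : topLen B O ≤ topLen (B.erase x) O + 1 := by omega
      calc w2 * topLen B O ≤ w2 * (topLen (B.erase x) O + 1) := Nat.mul_le_mul_left _ this
        _ = w2 * topLen (B.erase x) O + w2 := by ring
    omega
  · rw [gw, gw, if_neg hα, if_neg hα]; omega

/-- Erasing an element not in the counted prefix of `B` is free. -/
lemma gw_eraseB_free (hx : x ∈ O)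
    (h : x ∉ B.takeWhile (fun q => decide (q ∈ O))) :
    gw w1 w2 X B O ≤ gw w1 w2 X (B.erase x) O := by
  rw [gw, gw, topLen_erase_of_not_mem_takeWhile hx h]

/-- Erasing `x ∈ O` from the main list `X` costs at most `w1`. -/
lemma gw_eraseT (hx : x ∈ X) (hxO : x ∈ O) :
    gw w1 w2 X B O ≤ gw w1 w2 (X.erase x) B O + w1 := by
  by_cases h : x ∈ X.takeWhile (fun q => decide (q ∈ O))
  · have hτ : topLen (X.erase x) O = topLen X O - 1 := topLen_erase_of_mem_takeWhile h
    have hlen : (X.erase x).length = X.length - 1 := List.length_erase_of_mem hx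
    have h1 : 1 ≤ topLen X O := List.length_pos_of_mem h
    have hXlen : 1 ≤ X.length := List.length_pos_of_mem hx
    obtain ⟨m, hm⟩ : ∃ m, topLen X O = m + 1 := ⟨topLen X O - 1, by omega⟩
    obtain ⟨n, hn⟩ : ∃ n, X.length = n + 1 := ⟨X.length - 1, by omega⟩
    rw [gw, gw, hτ, hlen, hm, hn]
    simp only [Nat.add_sub_cancel]
    have hiff : (m = n) ↔ (m + 1 = n + 1) := by omega
    by_cases hα : m = n
    · rw [if_pos (hiff.1 hα), if_pos hα]
      have e1 : w1 * (m + 1) = w1 * m + w1 := by ring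
      omega
    · rw [if_neg (fun hc => hα (hiff.2 hc)), if_neg hα]
      have e1 : w1 * (m + 1) = w1 * m + w1 := by ring
      omega
  · have hτ : topLen (X.erase x) O = topLen X O := topLen_erase_of_not_mem_takeWhile hxO h
    have hgap : topLen X O + 2 ≤ X.length := gap_lemma hx hxO h
    have hlen : (X.erase x).length = X.length - 1 := List.length_erase_of_mem hx
    rw [gw, gw, hτ, hlen, if_neg (by omega), if_neg (by omega)]
    omega

/-- Replace `LRU(X)` by a new MRU page `x ∈ O`, demoting the LRU onto `B`:
gains at least `w2`. -/
lemma gw_consdem (hne : X ≠ []) (hx : x ∈ O) (hw : w2 ≤ w1) :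
    gw w1 w2 X B O + w2 ≤ gw w1 w2 (x :: X.dropLast) (X.getLast hne :: B) O := by
  have hXlen : 1 ≤ X.length := List.length_pos_of_ne_nil hne
  by_cases hα : topLen X O = X.length
  · have hlast : X.getLast hne ∈ O := getLast_mem_O hα hne
    have h1 : topLen X.dropLast O = X.length - 1 := by
      rw [topLen_dropLast, hα]; omega
    obtain ⟨n, hn⟩ : ∃ n, X.length = n + 1 := ⟨X.length - 1, by omega⟩
    rw [gw, gw, topLen_cons_mem hx, h1, topLen_cons_mem hlast, hα]
    simp only [List.length_cons, List.length_dropLast, hn, Nat.add_sub_cancel,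
      eq_self_iff_true, if_true]
    have e2 : w2 * (topLen B O + 1) = w2 * topLen B O + w2 := by ring
    rw [e2]
    omega
  · have ha : topLen X O ≤ X.length - 1 := by
      have := topLen_le_length (X := X) (O := O)
      omega
    have h1 : topLen X.dropLast O = topLen X O := by
      rw [topLen_dropLast]; omega
    rw [gw, gw, topLen_cons_mem hx, h1, if_neg hα]
    have e1 : w1 * (topLen X O + 1) = w1 * topLen X O + w1 := by ring
    rw [e1]
    omega

end TopLen

namespace TopLen

variable {O : Finset Page} {x : Page} {X B : List Page}

lemma filter_part_eq (hdisj : X.Disjoint B) :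
    (((X ++ B).takeWhile (fun q => decide (q ∈ O))).filter
      (fun q => decide (q ∈ B))).length
      = if topLen X O = X.length then topLen B O else 0 := by
  rw [List.takeWhile_append]
  split
  · next h =>
    rw [if_pos (by rw [topLen]; exact h)]
    rw [List.filter_append]
    have h1 : X.filter (fun q => decide (q ∈ B)) = [] := by
      apply List.filter_eq_nil_iff.2
      intro a ha
      simpa using hdisj ha
    have h2 : (B.takeWhile (fun q => decide (q ∈ O))).filter
        (fun q => decide (q ∈ B)) = B.takeWhile (fun q => decide (q ∈ O)) := by
      apply List.filter_eq_self.2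
      intro a ha
      simpa using (List.takeWhile_prefix _).subset ha
    rw [h1, h2]
    simp [topLen]
  · next h =>
    rw [if_neg (by rw [topLen]; exact h)]
    have h1 : (X.takeWhile (fun q => decide (q ∈ O))).filter
        (fun q => decide (q ∈ B)) = [] := by
      apply List.filter_eq_nil_iff.2
      intro a ha
      have : a ∈ X := (List.takeWhile_prefix _).subset ha
      simpa using hdisj this
    rw [h1]
    simp

end TopLen

open TopLen

/-- The weighted potential magnitude `b₁' + 2t₁' + 3b₂' + 4t₂'` in closed form. -/
def mval (s : ArcState) (O : Finset Page) : ℕ :=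
  gw 2 1 s.T1 s.B1 O + gw 4 3 s.T2 s.B2 O

lemma arcB1'_eq {s : ArcState} {O : Finset Page} (h : s.T1.Disjoint s.B1) :
    arcB1' s O = if topLen s.T1 O = s.T1.length then topLen s.B1 O else 0 :=
  filter_part_eq h

lemma arcB2'_eq {s : ArcState} {O : Finset Page} (h : s.T2.Disjoint s.B2) :
    arcB2' s O = if topLen s.T2 O = s.T2.length then topLen s.B2 O else 0 :=
  filter_part_eq h

lemma mval_eq {s : ArcState} {O : Finset Page}
    (h1 : s.T1.Disjoint s.B1) (h2 : s.T2.Disjoint s.B2) :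
    arcB1' s O + 2 * arcT1' s O + 3 * arcB2' s O + 4 * arcT2' s O = mval s O := by
  rw [arcB1'_eq h1, arcB2'_eq h2, mval, gw, gw, arcT1', arcT2']
  split_ifs <;> ring

lemma arcPhi_eq {s : ArcState} {O : Finset Page}
    (h1 : s.T1.Disjoint s.B1) (h2 : s.T2.Disjoint s.B2) :
    arcPhi s O = (s.p : ℤ) + 10 * (arcT s : ℤ) - (mval s O : ℤ) := by
  have h := mval_eq (O := O) h1 h2
  have h' : ((arcB1' s O : ℤ) + 2 * arcT1' s O + 3 * arcB2' s O + 4 * arcT2' s O)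
      = (mval s O : ℤ) := by exact_mod_cast congrArg (Nat.cast : ℕ → ℤ) h
  rw [arcPhi, arcPhiAt]
  linarith [h']

namespace TopLen

variable {O : Finset Page} {x : Page}

lemma nodup_all_mem_le_card {L : List Page} (hn : L.Nodup) (hm : ∀ a ∈ L, a ∈ O) :
    L.length ≤ O.card := by
  rw [← List.toFinset_card_of_nodup hn]
  exact Finset.card_le_card (fun a ha => hm a (List.mem_toFinset.1 ha))

lemma nodup_four {T1 T2 B1 B2 a1 a2 a3 a4 : List Page}
    (hn : (T1 ++ T2 ++ B1 ++ B2).Nodup)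
    (h1 : a1.Sublist T1) (h2 : a2.Sublist B1) (h3 : a3.Sublist T2) (h4 : a4.Sublist B2) :
    (a1 ++ a2 ++ a3 ++ a4).Nodup := by
  have hsub : (a1 ++ a2 ++ a3 ++ a4).Sublist (T1 ++ B1 ++ T2 ++ B2) :=
    ((h1.append h2).append h3).append h4
  apply hsub.nodup
  have hperm : List.Perm (T1 ++ T2 ++ B1 ++ B2) (T1 ++ B1 ++ T2 ++ B2) := by
    rw [List.append_assoc T1 T2 B1, List.append_assoc T1 B1 T2]
    exact (List.Perm.append_left T1 List.perm_append_comm).append_right B2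
  exact hperm.nodup hn

lemma cnt {T1 B1 T2 B2 : List Page}
    (hn : (T1 ++ T2 ++ B1 ++ B2).Nodup) :
    topLen T1 O + (if topLen T1 O = T1.length then topLen B1 O else 0)
      + topLen T2 O + (if topLen T2 O = T2.length then topLen B2 O else 0)
      ≤ O.card := by
  classical
  set a1 := T1.takeWhile (fun q => decide (q ∈ O)) with ha1
  set a2 := if topLen T1 O = T1.length then B1.takeWhile (fun q => decide (q ∈ O)) else [] with ha2
  set a3 := T2.takeWhile (fun q => decide (q ∈ O)) with ha3
  set a4 := if topLen T2 O = T2.length then B2.takeWhile (fun q => decide (q ∈ O)) else [] with ha4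
  have s1 : a1.Sublist T1 := (List.takeWhile_prefix _).sublist
  have s2 : a2.Sublist B1 := by
    rw [ha2]; split
    · exact (List.takeWhile_prefix _).sublist
    · exact List.nil_sublist _
  have s3 : a3.Sublist T2 := (List.takeWhile_prefix _).sublist
  have s4 : a4.Sublist B2 := by
    rw [ha4]; split
    · exact (List.takeWhile_prefix _).sublist
    · exact List.nil_sublist _
  have hnodup := nodup_four hn s1 s2 s3 s4
  have hmem : ∀ a ∈ a1 ++ a2 ++ a3 ++ a4, a ∈ O := by
    intro a ha
    simp only [List.mem_append] at ha
    rcases ha with ((h | h) | h) | h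
    · exact mem_of_mem_takeWhile h
    · rw [ha2] at h
      split at h
      · exact mem_of_mem_takeWhile h
      · simp at h
    · exact mem_of_mem_takeWhile h
    · rw [ha4] at h
      split at h
      · exact mem_of_mem_takeWhile h
      · simp at h
  have := nodup_all_mem_le_card hnodup hmem
  simp only [List.length_append] at this
  have l2 : a2.length = if topLen T1 O = T1.length then topLen B1 O else 0 := by
    rw [ha2]; split <;> simp [topLen]
  have l4 : a4.length = if topLen T2 O = T2.length then topLen B2 O else 0 := by
    rw [ha4]; split <;> simp [topLen]
  rw [l2, l4] at this
  have l1 : a1.length = topLen T1 O := rfl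
  have l3 : a3.length = topLen T2 O := rfl
  rw [l1, l3] at this
  omega

lemma cntx {T1 B1 T2 B2 : List Page}
    (hn : (T1 ++ T2 ++ B1 ++ B2).Nodup) (hxO : x ∈ O)
    (h1 : x ∉ T1) (h2 : x ∉ B1) (h3 : x ∉ T2) (h4 : x ∉ B2) :
    topLen T1 O + (if topLen T1 O = T1.length then topLen B1 O else 0)
      + topLen T2 O + (if topLen T2 O = T2.length then topLen B2 O else 0) + 1
      ≤ O.card := by
  have hn' : ((x :: T1) ++ T2 ++ B1 ++ B2).Nodup := by
    simp only [List.cons_append, List.nodup_cons]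
    refine ⟨by simp [h1, h2, h3, h4], hn⟩
  have := cnt (O := O) hn'
  rw [topLen_cons_mem hxO] at this
  simp only [List.length_cons] at this
  simp only [Nat.add_right_cancel_iff] at this
  omega

end TopLen

namespace TopLen

variable {N : ℕ} {s : ArcState} {x : Page} {X : List Page}

/-! ### Step equations -/

lemma arcStep_hit (h : x ∈ s.T1 ∨ x ∈ s.T2) :
    arcStep N s x = { s with T1 := s.T1.erase x, T2 := x :: s.T2.erase x } := by
  rw [arcStep, if_pos h]

lemma arcStep_b1 (h : ¬(x ∈ s.T1 ∨ x ∈ s.T2)) (hb : x ∈ s.B1) :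
    arcStep N s x =
      (fun s2 => { s2 with B1 := s2.B1.erase x, T2 := x :: s2.T2 })
        (arcReplace false { s with p := min (s.p + 1) N }) := by
  rw [arcStep, if_neg h, if_pos hb]

lemma arcStep_b2 (h : ¬(x ∈ s.T1 ∨ x ∈ s.T2)) (hb1 : x ∉ s.B1) (hb2 : x ∈ s.B2) :
    arcStep N s x =
      (fun s2 => { s2 with B2 := s2.B2.erase x, T2 := x :: s2.T2 })
        (arcReplace true { s with p := s.p - 1 }) := by
  rw [arcStep, if_neg h, if_neg hb1, if_pos hb2]

lemma arcStep_miss (h : ¬(x ∈ s.T1 ∨ x ∈ s.T2)) (hb1 : x ∉ s.B1) (hb2 : x ∉ s.B2) :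
    arcStep N s x =
      (fun s2 => { s2 with T1 := x :: s2.T1 })
        (if s.T1.length + s.B1.length = N then
          if s.T1.length < N then
            arcReplace false { s with B1 := s.B1.dropLast }
          else
            { s with T1 := s.T1.dropLast }
        else if s.T1.length + s.B1.length < N ∧
            N ≤ s.T1.length + s.T2.length + s.B1.length + s.B2.length then
          arcReplace false
            (if s.T1.length + s.T2.length + s.B1.length + s.B2.length = 2 * N then
              { s with B2 := s.B2.dropLast }
            else s)
        else s) := by
  rw [arcStep, if_neg h, if_neg hb1, if_neg hb2]

lemma arcReplace_pos {b : Bool} (h : 1 ≤ s.T1.length ∧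
    ((b = true ∧ s.T1.length = s.p) ∨ s.p < s.T1.length)) :
    arcReplace b s =
      { s with T1 := s.T1.dropLast, B1 := s.T1.getLast?.toList ++ s.B1 } := by
  rw [arcReplace, if_pos h]

lemma arcReplace_neg {b : Bool} (h : ¬(1 ≤ s.T1.length ∧
    ((b = true ∧ s.T1.length = s.p) ∨ s.p < s.T1.length))) :
    arcReplace b s =
      { s with T2 := s.T2.dropLast, B2 := s.T2.getLast?.toList ++ s.B2 } := by
  rw [arcReplace, if_neg h]

/-! ### Multiset helpers -/

lemma mdl (X : List Page) :
    (↑X.dropLast : Multiset Page) + ↑X.getLast?.toList = ↑X := by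
  rcases eq_or_ne X [] with h | h
  · subst h; simp
  · rw [List.getLast?_eq_getLast h]
    simp only [Option.toList_some]
    rw [Multiset.coe_add, List.dropLast_append_getLast h]

lemma merase (h : x ∈ X) : (↑X : Multiset Page) = x ::ₘ ↑(X.erase x) := by
  rw [Multiset.cons_coe, Multiset.coe_eq_coe]
  exact List.perm_cons_erase h

lemma nodup_of_meq {l l' : List Page} (h : (↑l' : Multiset Page) = ↑l)
    (hn : l.Nodup) : l'.Nodup :=
  ((Multiset.coe_eq_coe.1 h).symm.nodup hn)

lemma nodup_of_mle {l l' : List Page} (h : (↑l' : Multiset Page) ≤ ↑l)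
    (hn : l.Nodup) : l'.Nodup :=
  Multiset.coe_nodup.1 (Multiset.nodup_of_le h (Multiset.coe_nodup.2 hn))

lemma dropLast_mle (X : List Page) : (↑X.dropLast : Multiset Page) ≤ ↑X := by
  rw [Multiset.le_iff_exists_add]
  exact ⟨↑X.getLast?.toList, (mdl X).symm⟩

/-- Decompose the nodup hypothesis on the directory. -/
lemma nodup_parts (hn : (arcDir s).Nodup) :
    s.T1.Nodup ∧ s.T2.Nodup ∧ s.B1.Nodup ∧ s.B2.Nodup ∧
    s.T1.Disjoint s.T2 ∧ s.T1.Disjoint s.B1 ∧ s.T1.Disjoint s.B2 ∧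
    s.T2.Disjoint s.B1 ∧ s.T2.Disjoint s.B2 ∧ s.B1.Disjoint s.B2 := by
  rw [arcDir] at hn
  simp only [List.nodup_append, List.disjoint_append_right, List.disjoint_append_left] at hn
  obtain ⟨⟨⟨h1, h2, h12⟩, h3, h123⟩, h4, h1234⟩ := hn
  refine ⟨h1, h2, h3, h4, ?_, ?_, ?_, ?_, ?_, ?_⟩
  · intro a ha hb'; exact h12 a ha a hb' rfl
  · intro a ha hb'; exact h123 a (List.mem_append_left _ ha) a hb' rfl
  · intro a ha hb'; exact h1234 a (List.mem_append_left _ (List.mem_append_left _ ha)) a hb' rfl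
  · intro a ha hb'; exact h123 a (List.mem_append_right _ ha) a hb' rfl
  · intro a ha hb'; exact h1234 a (List.mem_append_left _ (List.mem_append_right _ ha)) a hb' rfl
  · intro a ha hb'; exact h1234 a (List.mem_append_right _ ha) a hb' rfl

end TopLen

namespace TopLen

variable {N : ℕ} {s : ArcState} {x : Page}

/-- The full invariant on reachable ARC states. -/
def ArcOK (N : ℕ) (s : ArcState) : Prop :=
  (arcDir s).Nodup ∧ s.T1.length + s.B1.length ≤ N ∧ arcT s ≤ N ∧ s.p ≤ N ∧
    (arcT s < N → s.B1 = [] ∧ s.B2 = [])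

lemma mval_le_of_card {O : Finset Page} (hn : (arcDir s).Nodup)
    (hcard : O.card ≤ N) : mval s O ≤ 4 * N := by
  have h := cnt (O := O) (T1 := s.T1) (B1 := s.B1) (T2 := s.T2) (B2 := s.B2) hn
  rw [mval, gw, gw]
  split_ifs at h ⊢ <;> omega

/-- The collection of conclusions needed about a single ARC step. -/
def Concl (N : ℕ) (s s' : ArcState) (x : Page) : Prop :=
  ArcOK N s' ∧
  (arcT s = N → arcT s' = N) ∧
  (arcT s < N → arcT s' = arcT s + (if x ∈ s.T1 ∨ x ∈ s.T2 then 0 else 1)) ∧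
  ((x ∈ s.T1 ∨ x ∈ s.T2) → s'.p = s.p) ∧
  (∀ O' : Finset Page, x ∈ O' → ¬(x ∈ s.T1 ∨ x ∈ s.T2) → 1 + s'.p ≤ s.p + mval s' O') ∧
  (∀ O : Finset Page, O.card ≤ N → x ∈ O → arcT s = N →
    (if x ∈ s.T1 ∨ x ∈ s.T2 then 0 else 1) + s'.p + mval s O ≤ s.p + mval s' O)

lemma erase_len_aux {y : Page} {X : List Page} :
    (X.erase y).length + (if y ∈ X then 1 else 0) = X.length := by
  split
  · next h =>
    rw [List.length_erase_of_mem h]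
    have := List.length_pos_of_mem h
    omega
  · next h =>
      rw [List.erase_of_not_mem h]
      omega

lemma branchH (hok : ArcOK N s) (hhit : x ∈ s.T1 ∨ x ∈ s.T2) :
    Concl N s { s with T1 := s.T1.erase x, T2 := x :: s.T2.erase x } x := by
  obtain ⟨hn, hL1, ht, hp, haux⟩ := hok
  obtain ⟨n1, n2, n3, n4, d12, d1b1, d1b2, d2b1, d2b2, db⟩ := nodup_parts hn
  have hcases : (x ∈ s.T1 ∧ x ∉ s.T2) ∨ (x ∈ s.T2 ∧ x ∉ s.T1) := by
    rcases hhit with h | h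
    · exact Or.inl ⟨h, fun h2 => d12 h h2⟩
    · exact Or.inr ⟨h, fun h2 => d12 h2 h⟩
  have e1 := erase_len_aux (y := x) (X := s.T1)
  have e2 := erase_len_aux (y := x) (X := s.T2)
  have hx12 : (if x ∈ s.T1 then 1 else 0) + (if x ∈ s.T2 then 1 else 0) = 1 := by
    rcases hcases with ⟨h1, h2⟩ | ⟨h1, h2⟩ <;> simp [h1, h2]
  have harcT : arcT { s with T1 := s.T1.erase x, T2 := x :: s.T2.erase x } = arcT s := by
    show (s.T1.erase x).length + (x :: s.T2.erase x).length = s.T1.length + s.T2.length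
    simp only [List.length_cons]
    omega
  refine ⟨⟨?_, ?_, ?_, hp, ?_⟩, fun h => by rw [harcT, h],
    fun h => by rw [harcT]; simp [hhit], fun _ => rfl,
    fun _ _ hc => absurd hhit hc, ?_⟩
  · -- nodup
    apply nodup_of_meq (l := arcDir s) ?_ hn
    rw [arcDir, arcDir]
    simp only [← Multiset.coe_add, ← Multiset.cons_coe, ← Multiset.singleton_add]
    rcases hcases with ⟨h1, h2⟩ | ⟨h1, h2⟩
    · rw [List.erase_of_not_mem h2, merase h1, ← Multiset.singleton_add]
      try ac_rfl
    · rw [List.erase_of_not_mem h2, merase h1, ← Multiset.singleton_add]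
      try ac_rfl
  · -- L1 lengths
    show (s.T1.erase x).length + s.B1.length ≤ N
    omega
  · -- arcT bound
    show (s.T1.erase x).length + (x :: s.T2.erase x).length ≤ N
    simp only [List.length_cons]
    rw [arcT] at ht
    omega
  · -- aux
    intro hlt
    rw [harcT] at hlt
    exact haux hlt
  · -- main inequality, OPT hit case
    intro O hcard hxO _
    rw [if_pos hhit]
    simp only [Nat.zero_add]
    have hm : mval s O ≤ mval { s with T1 := s.T1.erase x, T2 := x :: s.T2.erase x } O := by
      rw [mval, mval]
      simp only []
      rcases hcases with ⟨h1, h2⟩ | ⟨h1, h2⟩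
      · rw [List.erase_of_not_mem h2, gw_cons hxO]
        have := gw_eraseT (w1 := 2) (w2 := 1) (B := s.B1) (O := O) h1 hxO
        omega
      · rw [List.erase_of_not_mem h2]
        have h3 := gw_eraseT (w1 := 4) (w2 := 3) (B := s.B2) (O := O) h1 hxO
        have h4 := gw_cons (w1 := 4) (w2 := 3) (X := s.T2.erase x) (B := s.B2) (O := O) hxO
        omega
    omega

end TopLen

namespace TopLen

variable {N : ℕ} {s : ArcState} {x : Page}

lemma mdl' {X : List Page} (h : X ≠ []) :
    (↑X : Multiset Page) = ↑X.dropLast + {X.getLast h} := by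
  conv_lhs => rw [← List.dropLast_append_getLast h]
  rw [← Multiset.coe_add]
  rfl

lemma min_lt_right {a b : ℕ} (h : min a b < b) : min a b = a := by omega

lemma branchB1 (hok : ArcOK N s) (hN : 1 ≤ N)
    (hmiss : ¬(x ∈ s.T1 ∨ x ∈ s.T2)) (hb : x ∈ s.B1) :
    Concl N s (arcStep N s x) x := by
  obtain ⟨hn, hL1, ht, hp, haux⟩ := hok
  obtain ⟨n1, n2, n3, n4, d12, d1b1, d1b2, d2b1, d2b2, db⟩ := nodup_parts hn
  have hb1pos : 1 ≤ s.B1.length := List.length_pos_of_mem hb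
  have htN : arcT s = N := by
    by_contra hne
    have hlt : arcT s < N := lt_of_le_of_ne ht hne
    have := (haux hlt).1
    rw [this] at hb
    simp at hb
  have ht12 : s.T1.length + s.T2.length = N := htN
  have ht1 : s.T1.length ≤ N - 1 := by omega
  have ht2pos : 1 ≤ s.T2.length := by omega
  have hT2ne : s.T2 ≠ [] := List.length_pos_iff_ne_nil.1 ht2pos
  set p' := min (s.p + 1) N with hp'
  have hp'le : p' ≤ s.p + 1 := min_le_left _ _
  have hp'N : p' ≤ N := min_le_right _ _
  rw [arcStep_b1 hmiss hb]
  by_cases hcond : 1 ≤ s.T1.length ∧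
      ((false = true ∧ s.T1.length = p') ∨ p' < s.T1.length)
  · -- REPLACE demotes LRU(T1)
    have hT1ne : s.T1 ≠ [] := List.length_pos_iff_ne_nil.1 hcond.1
    rw [arcReplace_pos (s := { s with p := p' }) (by simpa using hcond)]
    dsimp only
    rw [List.getLast?_eq_getLast hT1ne, Option.toList_some, List.singleton_append]
    set y := s.T1.getLast hT1ne with hy
    have hxy : x ≠ y := by
      intro h
      exact d1b1 (h ▸ List.getLast_mem hT1ne) hb
    have herase : (y :: s.B1).erase x = y :: s.B1.erase x :=
      List.erase_cons_tail (by simpa using Ne.symm hxy)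
    rw [herase]
    -- now the state is fully explicit
    have hdll : s.T1.dropLast.length = s.T1.length - 1 := List.length_dropLast
    have hbel : (s.B1.erase x).length = s.B1.length - 1 := List.length_erase_of_mem hb
    have hcl1 : (x :: s.T2).length = s.T2.length + 1 := List.length_cons
    have hcl2 : (y :: s.B1.erase x).length = (s.B1.erase x).length + 1 := List.length_cons
    have harcT' : (s.T1.dropLast).length + (x :: s.T2).length = N := by omega
    refine ⟨⟨?_, ?_, ?_, hp'N, ?_⟩, fun _ => harcT', fun h => by omega,
      fun h => absurd h hmiss, ?_, ?_⟩
    · -- nodup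
      apply nodup_of_meq (l := arcDir s) ?_ hn
      rw [arcDir, arcDir]
      simp only [← Multiset.coe_add, ← Multiset.cons_coe, ← Multiset.singleton_add]
      rw [mdl' hT1ne, merase hb, ← Multiset.singleton_add, ← hy]
      ac_rfl
    · -- L1 length
      show (s.T1.dropLast).length + (y :: s.B1.erase x).length ≤ N
      omega
    · -- arcT ≤ N
      show (s.T1.dropLast).length + (x :: s.T2).length ≤ N
      omega
    · -- aux
      intro hlt
      dsimp only [arcT] at hlt
      omega
    · -- case I inequality
      intro O' hxO' _
      dsimp only [mval]
      have h4 := gw_head (w1 := 4) (w2 := 3) (X := s.T2) (B := s.B2) (O := O') hxO'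
      omega
    · -- case II inequality
      intro O hcard hxO _
      rw [if_neg hmiss]
      have hg1a := gw_eraseB (w1 := 2) (w2 := 1) (X := s.T1) (B := s.B1) (O := O) hxO
      have hg1b := gw_demote (X := s.T1) (B := s.B1.erase x) (O := O)
        hT1ne (by norm_num : (2:ℕ) ≤ 1 + 1)
      rw [← hy] at hg1b
      have hg2 := gw_cons (w1 := 4) (w2 := 3) (X := s.T2) (B := s.B2) (O := O) hxO
      dsimp only [mval]
      omega
  · -- REPLACE demotes LRU(T2)
    rw [arcReplace_neg (s := { s with p := p' }) (by simpa using hcond)]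
    dsimp only
    rw [List.getLast?_eq_getLast hT2ne, Option.toList_some, List.singleton_append]
    set z := s.T2.getLast hT2ne with hz
    have hdll : s.T2.dropLast.length = s.T2.length - 1 := List.length_dropLast
    have hbel : (s.B1.erase x).length = s.B1.length - 1 := List.length_erase_of_mem hb
    have hcl1 : (x :: s.T2.dropLast).length = s.T2.dropLast.length + 1 := List.length_cons
    have hcl2 : (z :: s.B2).length = s.B2.length + 1 := List.length_cons
    have harcT' : s.T1.length + (x :: s.T2.dropLast).length = N := by omega
    refine ⟨⟨?_, ?_, ?_, hp'N, ?_⟩, fun _ => harcT', fun h => by omega,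
      fun h => absurd h hmiss, ?_, ?_⟩
    · -- nodup
      apply nodup_of_meq (l := arcDir s) ?_ hn
      rw [arcDir, arcDir]
      simp only [← Multiset.coe_add, ← Multiset.cons_coe, ← Multiset.singleton_add]
      rw [mdl' hT2ne, merase hb, ← Multiset.singleton_add, ← hz]
      ac_rfl
    · -- L1 length
      show s.T1.length + (s.B1.erase x).length ≤ N
      omega
    · -- arcT ≤ N
      show s.T1.length + (x :: s.T2.dropLast).length ≤ N
      omega
    · -- aux
      intro hlt
      dsimp only [arcT] at hlt
      omega
    · -- case I inequality
      intro O' hxO' _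
      dsimp only [mval]
      have h4 : (4:ℕ) ≤ gw 4 3 (x :: s.T2.dropLast) (z :: s.B2) O' :=
        gw_head (w1 := 4) (w2 := 3) hxO'
      omega
    · -- case II inequality
      intro O hcard hxO _
      rw [if_neg hmiss]
      have hg1 := gw_eraseB (w1 := 2) (w2 := 1) (X := s.T1) (B := s.B1) (O := O) hxO
      have hg2 := gw_consdem (X := s.T2) (B := s.B2) (O := O) hT2ne hxO
        (by norm_num : (3:ℕ) ≤ 4)
      rw [← hz] at hg2
      dsimp only [mval]
      omega

end TopLen

namespace TopLen

variable {N : ℕ} {s : ArcState} {x : Page}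

lemma gw_B_irrel {O : Finset Page} {X B B' : List Page} {w1 w2 : ℕ}
    (hγ : topLen X O ≠ X.length) : gw w1 w2 X B O = gw w1 w2 X B' O := by
  rw [gw, gw, if_neg hγ, if_neg hγ]

lemma branchB2 (hok : ArcOK N s) (hN : 1 ≤ N)
    (hmiss : ¬(x ∈ s.T1 ∨ x ∈ s.T2)) (hb1 : x ∉ s.B1) (hb : x ∈ s.B2) :
    Concl N s (arcStep N s x) x := by
  obtain ⟨hn, hL1, ht, hp, haux⟩ := hok
  obtain ⟨n1, n2, n3, n4, d12, d1b1, d1b2, d2b1, d2b2, db⟩ := nodup_parts hn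
  have hb2pos : 1 ≤ s.B2.length := List.length_pos_of_mem hb
  have htN : arcT s = N := by
    by_contra hne
    have hlt : arcT s < N := lt_of_le_of_ne ht hne
    have := (haux hlt).2
    rw [this] at hb
    simp at hb
  have ht12 : s.T1.length + s.T2.length = N := htN
  set p' := s.p - 1 with hp'
  have hp'le : p' ≤ s.p := Nat.sub_le _ _
  have hp'N : p' ≤ N := le_trans hp'le hp
  rw [arcStep_b2 hmiss hb1 hb]
  by_cases hcond : 1 ≤ s.T1.length ∧
      ((true = true ∧ s.T1.length = p') ∨ p' < s.T1.length)
  · -- REPLACE demotes LRU(T1)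
    have hT1ne : s.T1 ≠ [] := List.length_pos_iff_ne_nil.1 hcond.1
    rw [arcReplace_pos (s := { s with p := p' }) (by simpa using hcond)]
    dsimp only
    rw [List.getLast?_eq_getLast hT1ne, Option.toList_some, List.singleton_append]
    set y := s.T1.getLast hT1ne with hy
    have hdll : s.T1.dropLast.length = s.T1.length - 1 := List.length_dropLast
    have hbel : (s.B2.erase x).length = s.B2.length - 1 := List.length_erase_of_mem hb
    have hcl1 : (x :: s.T2).length = s.T2.length + 1 := List.length_cons
    have hcl2 : (y :: s.B1).length = s.B1.length + 1 := List.length_cons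
    have harcT' : (s.T1.dropLast).length + (x :: s.T2).length = N := by omega
    refine ⟨⟨?_, ?_, ?_, hp'N, ?_⟩, fun _ => harcT', fun h => by omega,
      fun h => absurd h hmiss, ?_, ?_⟩
    · -- nodup
      apply nodup_of_meq (l := arcDir s) ?_ hn
      rw [arcDir, arcDir]
      simp only [← Multiset.coe_add, ← Multiset.cons_coe, ← Multiset.singleton_add]
      rw [mdl' hT1ne, merase hb, ← Multiset.singleton_add, ← hy]
      ac_rfl
    · -- L1 length
      show (s.T1.dropLast).length + (y :: s.B1).length ≤ N
      omega
    · -- arcT ≤ N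
      show (s.T1.dropLast).length + (x :: s.T2).length ≤ N
      omega
    · -- aux
      intro hlt
      dsimp only [arcT] at hlt
      omega
    · -- case I inequality
      intro O' hxO' _
      dsimp only [mval]
      have h4 := gw_head (w1 := 4) (w2 := 3) (X := s.T2) (B := s.B2.erase x) (O := O') hxO'
      omega
    · -- case II inequality
      intro O hcard hxO _
      rw [if_neg hmiss]
      dsimp only [mval]
      have hg2a := gw_cons (w1 := 4) (w2 := 3) (X := s.T2) (B := s.B2.erase x) (O := O) hxO
      by_cases hge : topLen s.T2 O = s.T2.length ∧
          x ∈ s.B2.takeWhile (fun q => decide (q ∈ O))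
      · -- γ ∧ εx : use the counting bound
        obtain ⟨hγ, hεx⟩ := hge
        have hcnt := cnt (O := O) (T1 := s.T1) (B1 := s.B1) (T2 := s.T2) (B2 := s.B2) hn
        rw [if_pos hγ] at hcnt
        have hd1 : 1 ≤ topLen s.B2 O := List.length_pos_of_mem hεx
        have hta := topLen_le_length (X := s.T1) (O := O)
        have hα : topLen s.T1 O ≠ s.T1.length := by
          intro hC
          rw [if_pos hC] at hcnt
          rw [hγ] at hcnt
          omega
        have hg1 := gw_demote0 (w1 := 2) (w2 := 1) (X := s.T1)
          (B := s.B1) (B' := y :: s.B1) (O := O) hα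
        have hg2b := gw_eraseB (w1 := 4) (w2 := 3) (X := s.T2) (B := s.B2) (O := O) hxO
        omega
      · -- erase free on the B2 side
        have hg2b : gw 4 3 s.T2 s.B2 O ≤ gw 4 3 s.T2 (s.B2.erase x) O := by
          by_cases hγ : topLen s.T2 O = s.T2.length
          · have hεx : x ∉ s.B2.takeWhile (fun q => decide (q ∈ O)) := by
              intro hc
              exact hge ⟨hγ, hc⟩
            exact gw_eraseB_free hxO hεx
          · exact le_of_eq (gw_B_irrel hγ)
        have hg1 := gw_demote (w1 := 2) (w2 := 1) (X := s.T1) (B := s.B1) (O := O)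
          hT1ne (by norm_num : (2:ℕ) ≤ 1 + 1)
        rw [← hy] at hg1
        omega
  · -- REPLACE demotes LRU(T2)
    have hT2ne : s.T2 ≠ [] := by
      intro hT2nil
      have ht2 : s.T2.length = 0 := by rw [hT2nil]; rfl
      have ht1N : s.T1.length = N := by omega
      apply hcond
      constructor
      · omega
      · rcases Nat.lt_or_ge p' s.T1.length with h | h
        · exact Or.inr h
        · exact Or.inl ⟨rfl, by omega⟩
    have ht2pos : 1 ≤ s.T2.length := List.length_pos_of_ne_nil hT2ne
    rw [arcReplace_neg (s := { s with p := p' }) (by simpa using hcond)]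
    dsimp only
    rw [List.getLast?_eq_getLast hT2ne, Option.toList_some, List.singleton_append]
    set z := s.T2.getLast hT2ne with hz
    have hxz : x ≠ z := by
      intro h
      exact d2b2 (h ▸ List.getLast_mem hT2ne) hb
    have herase : (z :: s.B2).erase x = z :: s.B2.erase x :=
      List.erase_cons_tail (by simpa using Ne.symm hxz)
    rw [herase]
    have hdll : s.T2.dropLast.length = s.T2.length - 1 := List.length_dropLast
    have hbel : (s.B2.erase x).length = s.B2.length - 1 := List.length_erase_of_mem hb
    have hcl1 : (x :: s.T2.dropLast).length = s.T2.dropLast.length + 1 := List.length_cons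
    have harcT' : s.T1.length + (x :: s.T2.dropLast).length = N := by omega
    refine ⟨⟨?_, ?_, ?_, hp'N, ?_⟩, fun _ => harcT', fun h => by omega,
      fun h => absurd h hmiss, ?_, ?_⟩
    · -- nodup
      apply nodup_of_meq (l := arcDir s) ?_ hn
      rw [arcDir, arcDir]
      simp only [← Multiset.coe_add, ← Multiset.cons_coe, ← Multiset.singleton_add]
      rw [mdl' hT2ne, merase hb, ← Multiset.singleton_add, ← hz]
      ac_rfl
    · -- L1 length
      show s.T1.length + s.B1.length ≤ N
      omega
    · -- arcT ≤ N
      show s.T1.length + (x :: s.T2.dropLast).length ≤ N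
      omega
    · -- aux
      intro hlt
      dsimp only [arcT] at hlt
      omega
    · -- case I inequality
      intro O' hxO' _
      dsimp only [mval]
      have h4 : (4:ℕ) ≤ gw 4 3 (x :: s.T2.dropLast) (z :: s.B2.erase x) O' :=
        gw_head (w1 := 4) (w2 := 3) hxO'
      omega
    · -- case II inequality
      intro O hcard hxO _
      rw [if_neg hmiss]
      dsimp only [mval]
      have hcd := gw_consdem (w1 := 4) (w2 := 3) (X := s.T2) (B := s.B2.erase x) (O := O)
        hT2ne hxO (by norm_num : (3:ℕ) ≤ 4)
      rw [← hz] at hcd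
      by_cases hge : topLen s.T2 O = s.T2.length ∧
          x ∈ s.B2.takeWhile (fun q => decide (q ∈ O))
      · -- γ ∧ εx : need p ≥ 1
        obtain ⟨hγ, hεx⟩ := hge
        have hppos : 1 ≤ s.p := by
          by_contra hp0
          have hp0' : s.p = 0 := by omega
          have hpz : p' = 0 := by rw [hp', hp0']
          have ht10 : s.T1.length = 0 := by
            by_contra ht1pos
            exact hcond ⟨by omega, by omega⟩
          have hcnt := cnt (O := O) (T1 := s.T1) (B1 := s.B1) (T2 := s.T2) (B2 := s.B2) hn
          rw [if_pos hγ] at hcnt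
          have hd1 : 1 ≤ topLen s.B2 O := List.length_pos_of_mem hεx
          rw [hγ] at hcnt
          omega
        have hg2b := gw_eraseB (w1 := 4) (w2 := 3) (X := s.T2) (B := s.B2) (O := O) hxO
        omega
      · -- erase free on the B2 side
        have hg2b : gw 4 3 s.T2 s.B2 O ≤ gw 4 3 s.T2 (s.B2.erase x) O := by
          by_cases hγ : topLen s.T2 O = s.T2.length
          · have hεx : x ∉ s.B2.takeWhile (fun q => decide (q ∈ O)) := by
              intro hc
              exact hge ⟨hγ, hc⟩
            exact gw_eraseB_free hxO hεx
          · exact le_of_eq (gw_B_irrel hγ)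
        omega

end TopLen

namespace TopLen

variable {N : ℕ} {s : ArcState} {x : Page}

lemma nodup_cons_dir (hn : (arcDir s).Nodup) (h1 : x ∉ s.T1) (h2 : x ∉ s.T2)
    (h3 : x ∉ s.B1) (h4 : x ∉ s.B2) : (x :: arcDir s).Nodup := by
  rw [List.nodup_cons]
  refine ⟨?_, hn⟩
  rw [arcDir]
  simp [h1, h2, h3, h4]

lemma branchMiss (hok : ArcOK N s) (hN : 1 ≤ N)
    (hmiss : ¬(x ∈ s.T1 ∨ x ∈ s.T2)) (hb1 : x ∉ s.B1) (hb2 : x ∉ s.B2) :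
    Concl N s (arcStep N s x) x := by
  obtain ⟨hn, hL1, ht, hp, haux⟩ := hok
  obtain ⟨n1, n2, n3, n4, d12, d1b1, d1b2, d2b1, d2b2, db⟩ := nodup_parts hn
  push_neg at hmiss
  obtain ⟨ht1x, ht2x⟩ := hmiss
  have hmiss' : ¬(x ∈ s.T1 ∨ x ∈ s.T2) := by tauto
  have hnx : (x :: arcDir s).Nodup := nodup_cons_dir hn ht1x ht2x hb1 hb2
  rw [arcStep_miss hmiss' hb1 hb2]
  by_cases hA : s.T1.length + s.B1.length = N
  · rw [if_pos hA]
    by_cases hB : s.T1.length < N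
    · -- M1 : drop LRU(B1), then REPLACE
      rw [if_pos hB]
      have hb1pos : 1 ≤ s.B1.length := by omega
      have hB1ne : s.B1 ≠ [] := List.length_pos_iff_ne_nil.1 hb1pos
      have htN : arcT s = N := by
        by_contra hne
        have hlt : arcT s < N := lt_of_le_of_ne ht hne
        have := (haux hlt).1
        rw [this] at hb1pos
        simp at hb1pos
      have ht12 : s.T1.length + s.T2.length = N := htN
      by_cases hcond : 1 ≤ s.T1.length ∧ s.p < s.T1.length
      · -- R1
        have hT1ne : s.T1 ≠ [] := List.length_pos_iff_ne_nil.1 hcond.1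
        rw [arcReplace_pos (s := { s with B1 := s.B1.dropLast }) (by simpa using hcond)]
        dsimp only
        rw [List.getLast?_eq_getLast hT1ne, Option.toList_some, List.singleton_append]
        set y := s.T1.getLast hT1ne with hy
        have hdll : s.T1.dropLast.length = s.T1.length - 1 := List.length_dropLast
        have hdlb : s.B1.dropLast.length = s.B1.length - 1 := List.length_dropLast
        have hcl1 : (x :: s.T1.dropLast).length = s.T1.dropLast.length + 1 :=
          List.length_cons
        have hcl2 : (y :: s.B1.dropLast).length = s.B1.dropLast.length + 1 :=
          List.length_cons
        have harcT' : (x :: s.T1.dropLast).length + s.T2.length = N := by omega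
        refine ⟨⟨?_, ?_, ?_, hp, ?_⟩, fun _ => harcT', fun h => by omega,
          fun h => absurd h hmiss', ?_, ?_⟩
        · -- nodup
          apply nodup_of_mle (l := x :: arcDir s) ?_ hnx
          rw [Multiset.le_iff_exists_add]
          refine ⟨↑s.B1.getLast?.toList, ?_⟩
          rw [arcDir, arcDir]
          simp only [← Multiset.coe_add, ← Multiset.cons_coe, ← Multiset.singleton_add]
          rw [mdl' hT1ne, ← mdl s.B1, ← hy]
          ac_rfl
        · -- L1 length
          show (x :: s.T1.dropLast).length + (y :: s.B1.dropLast).length ≤ N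
          omega
        · -- arcT ≤ N
          show (x :: s.T1.dropLast).length + s.T2.length ≤ N
          omega
        · -- aux
          intro hlt
          dsimp only [arcT] at hlt
          omega
        · -- case I
          intro O' hxO' _
          dsimp only [mval]
          have h2 := gw_head (w1 := 2) (w2 := 1) (X := s.T1.dropLast)
            (B := y :: s.B1.dropLast) (O := O') hxO'
          omega
        · -- case II
          intro O hcard hxO _
          rw [if_neg hmiss']
          dsimp only [mval]
          have hcx := cntx (O := O) (T1 := s.T1) (B1 := s.B1) (T2 := s.T2) (B2 := s.B2)
            hn hxO ht1x hb1 ht2x hb2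
          have hdropB : gw 2 1 s.T1 s.B1 O ≤ gw 2 1 s.T1 s.B1.dropLast O := by
            apply gw_dropB
            intro hα
            rw [if_pos hα, hα] at hcx
            have := topLen_le_length (X := s.B1) (O := O)
            omega
          have hdem := gw_demote (w1 := 2) (w2 := 1) (X := s.T1) (B := s.B1.dropLast)
            (O := O) hT1ne (by norm_num : (2:ℕ) ≤ 1 + 1)
          rw [← hy] at hdem
          have hcons := gw_cons (w1 := 2) (w2 := 1) (X := s.T1.dropLast)
            (B := y :: s.B1.dropLast) (O := O) hxO
          omega
      · -- R2
        have ht2pos : 1 ≤ s.T2.length := by omega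
        have hT2ne : s.T2 ≠ [] := List.length_pos_iff_ne_nil.1 ht2pos
        rw [arcReplace_neg (s := { s with B1 := s.B1.dropLast }) (by simpa using hcond)]
        dsimp only
        rw [List.getLast?_eq_getLast hT2ne, Option.toList_some, List.singleton_append]
        set z := s.T2.getLast hT2ne with hz
        have hdll : s.T2.dropLast.length = s.T2.length - 1 := List.length_dropLast
        have hdlb : s.B1.dropLast.length = s.B1.length - 1 := List.length_dropLast
        have hcl1 : (x :: s.T1).length = s.T1.length + 1 := List.length_cons
        have hcl2 : (z :: s.B2).length = s.B2.length + 1 := List.length_cons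
        have harcT' : (x :: s.T1).length + s.T2.dropLast.length = N := by omega
        refine ⟨⟨?_, ?_, ?_, hp, ?_⟩, fun _ => harcT', fun h => by omega,
          fun h => absurd h hmiss', ?_, ?_⟩
        · -- nodup
          apply nodup_of_mle (l := x :: arcDir s) ?_ hnx
          rw [Multiset.le_iff_exists_add]
          refine ⟨↑s.B1.getLast?.toList, ?_⟩
          rw [arcDir, arcDir]
          simp only [← Multiset.coe_add, ← Multiset.cons_coe, ← Multiset.singleton_add]
          rw [mdl' hT2ne, ← mdl s.B1, ← hz]
          ac_rfl
        · -- L1 length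
          show (x :: s.T1).length + s.B1.dropLast.length ≤ N
          omega
        · -- arcT ≤ N
          show (x :: s.T1).length + s.T2.dropLast.length ≤ N
          omega
        · -- aux
          intro hlt
          dsimp only [arcT] at hlt
          omega
        · -- case I
          intro O' hxO' _
          dsimp only [mval]
          have h2 := gw_head (w1 := 2) (w2 := 1) (X := s.T1)
            (B := s.B1.dropLast) (O := O') hxO'
          omega
        · -- case II
          intro O hcard hxO _
          rw [if_neg hmiss']
          dsimp only [mval]
          have hcx := cntx (O := O) (T1 := s.T1) (B1 := s.B1) (T2 := s.T2) (B2 := s.B2)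
            hn hxO ht1x hb1 ht2x hb2
          have hdropB : gw 2 1 s.T1 s.B1 O ≤ gw 2 1 s.T1 s.B1.dropLast O := by
            apply gw_dropB
            intro hα
            rw [if_pos hα, hα] at hcx
            have := topLen_le_length (X := s.B1) (O := O)
            omega
          have hdem := gw_demote (w1 := 4) (w2 := 3) (X := s.T2) (B := s.B2)
            (O := O) hT2ne (by norm_num : (4:ℕ) ≤ 3 + 1)
          rw [← hz] at hdem
          have hcons := gw_cons (w1 := 2) (w2 := 1) (X := s.T1)
            (B := s.B1.dropLast) (O := O) hxO
          omega
    · -- M2 : T1 is the whole cache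
      rw [if_neg hB]
      dsimp only
      have ht1N : s.T1.length = N := by
        rw [arcT] at ht
        omega
      have hT1ne : s.T1 ≠ [] := by
        intro h
        rw [h] at ht1N
        simp at ht1N
        omega
      have ht20 : s.T2.length = 0 := by
        rw [arcT] at ht
        omega
      have htN : arcT s = N := by
        rw [arcT]
        omega
      have hdll : s.T1.dropLast.length = s.T1.length - 1 := List.length_dropLast
      have hcl1 : (x :: s.T1.dropLast).length = s.T1.dropLast.length + 1 :=
        List.length_cons
      have harcT' : (x :: s.T1.dropLast).length + s.T2.length = N := by omega
      refine ⟨⟨?_, ?_, ?_, hp, ?_⟩, fun _ => harcT', fun h => by omega,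
        fun h => absurd h hmiss', ?_, ?_⟩
      · -- nodup
        apply nodup_of_mle (l := x :: arcDir s) ?_ hnx
        rw [Multiset.le_iff_exists_add]
        refine ⟨↑s.T1.getLast?.toList, ?_⟩
        rw [arcDir, arcDir]
        simp only [← Multiset.coe_add, ← Multiset.cons_coe, ← Multiset.singleton_add]
        rw [← mdl s.T1]
        ac_rfl
      · -- L1 length
        show (x :: s.T1.dropLast).length + s.B1.length ≤ N
        omega
      · -- arcT ≤ N
        show (x :: s.T1.dropLast).length + s.T2.length ≤ N
        omega
      · -- aux
        intro hlt
        dsimp only [arcT] at hlt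
        omega
      · -- case I
        intro O' hxO' _
        dsimp only [mval]
        have h2 := gw_head (w1 := 2) (w2 := 1) (X := s.T1.dropLast)
          (B := s.B1) (O := O') hxO'
        omega
      · -- case II
        intro O hcard hxO _
        rw [if_neg hmiss']
        dsimp only [mval]
        have hcx := cntx (O := O) (T1 := s.T1) (B1 := s.B1) (T2 := s.T2) (B2 := s.B2)
          hn hxO ht1x hb1 ht2x hb2
        have hα : topLen s.T1 O ≠ s.T1.length := by
          intro hα
          rw [if_pos hα, hα] at hcx
          omega
        have hdem0 := gw_demote0 (w1 := 2) (w2 := 1) (X := s.T1)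
          (B := s.B1) (B' := s.B1) (O := O) hα
        have hcons := gw_cons (w1 := 2) (w2 := 1) (X := s.T1.dropLast)
          (B := s.B1) (O := O) hxO
        omega
  · rw [if_neg hA]
    by_cases hC : s.T1.length + s.B1.length < N ∧
        N ≤ s.T1.length + s.T2.length + s.B1.length + s.B2.length
    · -- M3
      rw [if_pos hC]
      have htN : arcT s = N := by
        by_contra hne
        have hlt : arcT s < N := lt_of_le_of_ne ht hne
        obtain ⟨e1, e2⟩ := haux hlt
        rw [arcT] at hlt
        rw [e1, e2] at hC
        simp at hC
        omega
      have ht12 : s.T1.length + s.T2.length = N := htN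
      have ht2pos : 1 ≤ s.T2.length := by omega
      have hT2ne : s.T2 ≠ [] := List.length_pos_iff_ne_nil.1 ht2pos
      -- facts about the B2 side, used when the directory is full
      by_cases hD : s.T1.length + s.T2.length + s.B1.length + s.B2.length = 2 * N
      · rw [if_pos hD]
        have hb2pos : 1 ≤ s.B2.length := by omega
        have hdlb : s.B2.dropLast.length = s.B2.length - 1 := List.length_dropLast
        by_cases hcond : 1 ≤ s.T1.length ∧ s.p < s.T1.length
        · -- R1
          have hT1ne : s.T1 ≠ [] := List.length_pos_iff_ne_nil.1 hcond.1
          rw [arcReplace_pos (s := { s with B2 := s.B2.dropLast }) (by simpa using hcond)]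
          dsimp only
          rw [List.getLast?_eq_getLast hT1ne, Option.toList_some, List.singleton_append]
          set y := s.T1.getLast hT1ne with hy
          have hdll : s.T1.dropLast.length = s.T1.length - 1 := List.length_dropLast
          have hcl1 : (x :: s.T1.dropLast).length = s.T1.dropLast.length + 1 :=
            List.length_cons
          have hcl2 : (y :: s.B1).length = s.B1.length + 1 := List.length_cons
          have harcT' : (x :: s.T1.dropLast).length + s.T2.length = N := by omega
          refine ⟨⟨?_, ?_, ?_, hp, ?_⟩, fun _ => harcT', fun h => by omega,
            fun h => absurd h hmiss', ?_, ?_⟩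
          · apply nodup_of_mle (l := x :: arcDir s) ?_ hnx
            rw [Multiset.le_iff_exists_add]
            refine ⟨↑s.B2.getLast?.toList, ?_⟩
            rw [arcDir, arcDir]
            simp only [← Multiset.coe_add, ← Multiset.cons_coe, ← Multiset.singleton_add]
            rw [mdl' hT1ne, ← mdl s.B2, ← hy]
            ac_rfl
          · show (x :: s.T1.dropLast).length + (y :: s.B1).length ≤ N
            omega
          · show (x :: s.T1.dropLast).length + s.T2.length ≤ N
            omega
          · intro hlt
            dsimp only [arcT] at hlt
            omega
          · intro O' hxO' _
            dsimp only [mval]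
            have h2 := gw_head (w1 := 2) (w2 := 1) (X := s.T1.dropLast)
              (B := y :: s.B1) (O := O') hxO'
            omega
          · intro O hcard hxO _
            rw [if_neg hmiss']
            dsimp only [mval]
            have hcnt := cnt (O := O) (T1 := s.T1) (B1 := s.B1) (T2 := s.T2) (B2 := s.B2) hn
            have hdropB : gw 4 3 s.T2 s.B2 O ≤ gw 4 3 s.T2 s.B2.dropLast O := by
              apply gw_dropB
              intro hγ
              rw [if_pos hγ, hγ] at hcnt
              have := topLen_le_length (X := s.B2) (O := O)
              split_ifs at hcnt <;> omega
            have hdem := gw_demote (w1 := 2) (w2 := 1) (X := s.T1) (B := s.B1)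
              (O := O) hT1ne (by norm_num : (2:ℕ) ≤ 1 + 1)
            rw [← hy] at hdem
            have hcons := gw_cons (w1 := 2) (w2 := 1) (X := s.T1.dropLast)
              (B := y :: s.B1) (O := O) hxO
            omega
        · -- R2
          rw [arcReplace_neg (s := { s with B2 := s.B2.dropLast }) (by simpa using hcond)]
          dsimp only
          rw [List.getLast?_eq_getLast hT2ne, Option.toList_some, List.singleton_append]
          set z := s.T2.getLast hT2ne with hz
          have hdll : s.T2.dropLast.length = s.T2.length - 1 := List.length_dropLast
          have hcl1 : (x :: s.T1).length = s.T1.length + 1 := List.length_cons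
          have hcl2 : (z :: s.B2.dropLast).length = s.B2.dropLast.length + 1 :=
            List.length_cons
          have harcT' : (x :: s.T1).length + s.T2.dropLast.length = N := by omega
          refine ⟨⟨?_, ?_, ?_, hp, ?_⟩, fun _ => harcT', fun h => by omega,
            fun h => absurd h hmiss', ?_, ?_⟩
          · apply nodup_of_mle (l := x :: arcDir s) ?_ hnx
            rw [Multiset.le_iff_exists_add]
            refine ⟨↑s.B2.getLast?.toList, ?_⟩
            rw [arcDir, arcDir]
            simp only [← Multiset.coe_add, ← Multiset.cons_coe, ← Multiset.singleton_add]
            rw [mdl' hT2ne, ← mdl s.B2, ← hz]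
            ac_rfl
          · show (x :: s.T1).length + s.B1.length ≤ N
            omega
          · show (x :: s.T1).length + s.T2.dropLast.length ≤ N
            omega
          · intro hlt
            dsimp only [arcT] at hlt
            omega
          · intro O' hxO' _
            dsimp only [mval]
            have h2 := gw_head (w1 := 2) (w2 := 1) (X := s.T1)
              (B := s.B1) (O := O') hxO'
            omega
          · intro O hcard hxO _
            rw [if_neg hmiss']
            dsimp only [mval]
            have hcnt := cnt (O := O) (T1 := s.T1) (B1 := s.B1) (T2 := s.T2) (B2 := s.B2) hn
            have hdropB : gw 4 3 s.T2 s.B2 O ≤ gw 4 3 s.T2 s.B2.dropLast O := by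
              apply gw_dropB
              intro hγ
              rw [if_pos hγ, hγ] at hcnt
              have := topLen_le_length (X := s.B2) (O := O)
              split_ifs at hcnt <;> omega
            have hdem := gw_demote (w1 := 4) (w2 := 3) (X := s.T2)
              (B := s.B2.dropLast) (O := O) hT2ne (by norm_num : (4:ℕ) ≤ 3 + 1)
            rw [← hz] at hdem
            have hcons := gw_cons (w1 := 2) (w2 := 1) (X := s.T1)
              (B := s.B1) (O := O) hxO
            omega
      · rw [if_neg hD]
        by_cases hcond : 1 ≤ s.T1.length ∧ s.p < s.T1.length
        · -- R1
          have hT1ne : s.T1 ≠ [] := List.length_pos_iff_ne_nil.1 hcond.1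
          rw [arcReplace_pos (s := s) (by simpa using hcond)]
          dsimp only
          rw [List.getLast?_eq_getLast hT1ne, Option.toList_some, List.singleton_append]
          set y := s.T1.getLast hT1ne with hy
          have hdll : s.T1.dropLast.length = s.T1.length - 1 := List.length_dropLast
          have hcl1 : (x :: s.T1.dropLast).length = s.T1.dropLast.length + 1 :=
            List.length_cons
          have hcl2 : (y :: s.B1).length = s.B1.length + 1 := List.length_cons
          have harcT' : (x :: s.T1.dropLast).length + s.T2.length = N := by omega
          refine ⟨⟨?_, ?_, ?_, hp, ?_⟩, fun _ => harcT', fun h => by omega,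
            fun h => absurd h hmiss', ?_, ?_⟩
          · apply nodup_of_mle (l := x :: arcDir s) ?_ hnx
            rw [Multiset.le_iff_exists_add]
            refine ⟨0, ?_⟩
            rw [arcDir, arcDir]
            simp only [← Multiset.coe_add, ← Multiset.cons_coe, ← Multiset.singleton_add]
            rw [mdl' hT1ne, ← hy, add_zero]
            ac_rfl
          · show (x :: s.T1.dropLast).length + (y :: s.B1).length ≤ N
            omega
          · show (x :: s.T1.dropLast).length + s.T2.length ≤ N
            omega
          · intro hlt
            dsimp only [arcT] at hlt
            omega
          · intro O' hxO' _
            dsimp only [mval]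
            have h2 := gw_head (w1 := 2) (w2 := 1) (X := s.T1.dropLast)
              (B := y :: s.B1) (O := O') hxO'
            omega
          · intro O hcard hxO _
            rw [if_neg hmiss']
            dsimp only [mval]
            have hdem := gw_demote (w1 := 2) (w2 := 1) (X := s.T1) (B := s.B1)
              (O := O) hT1ne (by norm_num : (2:ℕ) ≤ 1 + 1)
            rw [← hy] at hdem
            have hcons := gw_cons (w1 := 2) (w2 := 1) (X := s.T1.dropLast)
              (B := y :: s.B1) (O := O) hxO
            omega
        · -- R2
          rw [arcReplace_neg (s := s) (by simpa using hcond)]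
          dsimp only
          rw [List.getLast?_eq_getLast hT2ne, Option.toList_some, List.singleton_append]
          set z := s.T2.getLast hT2ne with hz
          have hdll : s.T2.dropLast.length = s.T2.length - 1 := List.length_dropLast
          have hcl1 : (x :: s.T1).length = s.T1.length + 1 := List.length_cons
          have hcl2 : (z :: s.B2).length = s.B2.length + 1 := List.length_cons
          have harcT' : (x :: s.T1).length + s.T2.dropLast.length = N := by omega
          refine ⟨⟨?_, ?_, ?_, hp, ?_⟩, fun _ => harcT', fun h => by omega,
            fun h => absurd h hmiss', ?_, ?_⟩
          · apply nodup_of_mle (l := x :: arcDir s) ?_ hnx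
            rw [Multiset.le_iff_exists_add]
            refine ⟨0, ?_⟩
            rw [arcDir, arcDir]
            simp only [← Multiset.coe_add, ← Multiset.cons_coe, ← Multiset.singleton_add]
            rw [mdl' hT2ne, ← hz, add_zero]
            ac_rfl
          · show (x :: s.T1).length + s.B1.length ≤ N
            omega
          · show (x :: s.T1).length + s.T2.dropLast.length ≤ N
            omega
          · intro hlt
            dsimp only [arcT] at hlt
            omega
          · intro O' hxO' _
            dsimp only [mval]
            have h2 := gw_head (w1 := 2) (w2 := 1) (X := s.T1)
              (B := s.B1) (O := O') hxO'
            omega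
          · intro O hcard hxO _
            rw [if_neg hmiss']
            dsimp only [mval]
            have hdem := gw_demote (w1 := 4) (w2 := 3) (X := s.T2) (B := s.B2)
              (O := O) hT2ne (by norm_num : (4:ℕ) ≤ 3 + 1)
            rw [← hz] at hdem
            have hcons := gw_cons (w1 := 2) (w2 := 1) (X := s.T1)
              (B := s.B1) (O := O) hxO
            omega
    · -- M4 : the directory is not yet full
      rw [if_neg hC]
      dsimp only
      have hlt : arcT s < N := by
        rcases lt_or_eq_of_le ht with h | h
        · exact h
        · exfalso
          rw [arcT] at h
          exact hC ⟨by omega, by omega⟩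
      obtain ⟨e1, e2⟩ := haux hlt
      have hb1len : s.B1.length = 0 := by rw [e1]; rfl
      have hcl1 : (x :: s.T1).length = s.T1.length + 1 := List.length_cons
      have htlt : s.T1.length + s.T2.length < N := hlt
      refine ⟨⟨?_, ?_, ?_, hp, ?_⟩, fun h => by omega, ?_,
        fun h => absurd h hmiss', ?_, ?_⟩
      · apply nodup_of_meq (l := x :: arcDir s) ?_ hnx
        rw [arcDir, arcDir]
        simp only [← Multiset.coe_add, ← Multiset.cons_coe, ← Multiset.singleton_add]
        ac_rfl
      · show (x :: s.T1).length + s.B1.length ≤ N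
        omega
      · show (x :: s.T1).length + s.T2.length ≤ N
        omega
      · intro _
        exact ⟨e1, e2⟩
      · intro _
        rw [if_neg hmiss']
        dsimp only [arcT]
        omega
      · intro O' hxO' _
        dsimp only [mval]
        have h2 := gw_head (w1 := 2) (w2 := 1) (X := s.T1)
          (B := s.B1) (O := O') hxO'
        omega
      · intro O hcard hxO hteq
        exact absurd hteq (by omega)

end TopLen

namespace TopLen

variable {N : ℕ} {s : ArcState} {x : Page}

lemma step_concl (hN : 1 ≤ N) (hok : ArcOK N s) (x : Page) :
    Concl N s (arcStep N s x) x := by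
  by_cases hhit : x ∈ s.T1 ∨ x ∈ s.T2
  · rw [arcStep_hit hhit]
    exact branchH hok hhit
  · by_cases hb1 : x ∈ s.B1
    · exact branchB1 hok hN hhit hb1
    · by_cases hb2 : x ∈ s.B2
      · exact branchB2 hok hN hhit hb1 hb2
      · exact branchMiss hok hN hhit hb1 hb2

lemma arcRun_append (l1 l2 : List Page) :
    ∀ s, arcRun N s (l1 ++ l2) = arcRun N (arcRun N s l1) l2 := by
  induction l1 with
  | nil => intro s; rfl
  | cons a tl ih => intro s; rw [List.cons_append, arcRun, arcRun, ih]

lemma arcCost_append (l1 l2 : List Page) :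
    ∀ s, arcCost N s (l1 ++ l2) = arcCost N s l1 + arcCost N (arcRun N s l1) l2 := by
  induction l1 with
  | nil => intro s; rw [List.nil_append, arcCost, arcRun]; omega
  | cons a tl ih =>
    intro s
    rw [List.cons_append, arcCost, arcCost, ih, arcRun]
    omega

lemma run_ok (hN : 1 ≤ N) (l : List Page) :
    ArcOK N (arcRun N ArcState.init l) ∧
      min N (arcCost N ArcState.init l) ≤ arcT (arcRun N ArcState.init l) := by
  induction l using List.reverseRecOn with
  | nil =>
    constructor
    · refine ⟨?_, ?_, ?_, ?_, ?_⟩ <;> simp [arcRun, ArcState.init, arcDir, arcT]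
    · simp [arcCost, arcRun, arcT, ArcState.init]
  | append_singleton l a ih =>
    obtain ⟨hok, hmin⟩ := ih
    have hcon := step_concl hN hok a
    obtain ⟨hok', ht2, ht3, _, _, _⟩ := hcon
    rw [arcRun_append, arcCost_append]
    simp only [arcRun, arcCost]
    refine ⟨hok', ?_⟩
    have htle := hok.2.2.1
    rcases eq_or_lt_of_le htle with hteq | htlt
    · rw [ht2 hteq]
      omega
    · have := ht3 htlt
      split_ifs at this ⊢ <;> omega

end TopLen

open TopLen

/-- In the parallel execution of ARC and OPT (OPT serving each
request first), for every request `σ_j` lying after phase `P(0)` (i.e. with at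
least `N` ARC faults before it), the per-request inequality
`C_arc(σ_j) + ΔΦ ≤ 4N · C_opt(σ_j)` holds, where `ΔΦ` is the total change of
`Φ = p − [(b₁'−t) + 2(t₁'−t) + 3(b₂'−t) + 4(t₂'−t)]` during the processing of
`σ_j` by both algorithms. -/
theorem arc_per_request_inequality (N : ℕ) (σ : List Page) (C : ℕ → Finset Page)
    (hC : OptExec N σ C) (hCopt : optFaults σ C = optCost N σ)
    (j : ℕ) (hj : j < σ.length)
    (hphase : N ≤ arcCost N ArcState.init (σ.take j))
    (s : ArcState) (hs : s = arcRun N ArcState.init (σ.take j)) :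
    (if σ.getD j 0 ∈ s.T1 ∨ σ.getD j 0 ∈ s.T2 then (0 : ℤ) else 1)
        + (arcPhi (arcStep N s (σ.getD j 0)) (C (j + 1)) - arcPhi s (C j))
      ≤ 4 * N * (if σ.getD j 0 ∈ C j then (0 : ℤ) else 1) := by
  obtain ⟨hC0, hCcard, hCstep⟩ := hC
  obtain ⟨hmem1, hsub, hpres⟩ := hCstep j hj
  set x := σ.getD j 0 with hx
  have hN : 1 ≤ N := by
    have h0 : 0 < (C (j + 1)).card := Finset.card_pos.2 ⟨_, hmem1⟩
    have := hCcard (j + 1)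
    omega
  obtain ⟨hok, hmin⟩ := run_ok (N := N) hN (σ.take j)
  rw [← hs] at hok hmin
  have htN : arcT s = N := by
    have h1 := hok.2.2.1
    have h2 : min N (arcCost N ArcState.init (σ.take j)) = N := by omega
    omega
  obtain ⟨hok', ht2, -, hp4, hp5, hp6⟩ := step_concl hN hok x
  have htN' : arcT (arcStep N s x) = N := ht2 htN
  obtain ⟨-, -, -, -, -, d1b1, -, -, d2b2, -⟩ := nodup_parts hok.1
  obtain ⟨-, -, -, -, -, e1b1, -, -, e2b2, -⟩ := nodup_parts hok'.1
  rw [arcPhi_eq d1b1 d2b2, arcPhi_eq e1b1 e2b2, htN, htN']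
  by_cases hxC : x ∈ C j
  · rw [hpres hxC, if_pos hxC]
    have h6 := hp6 (C j) (hCcard j) hxC htN
    by_cases hhit : x ∈ s.T1 ∨ x ∈ s.T2
    · rw [if_pos hhit] at h6 ⊢
      have h6' : ((arcStep N s x).p : ℤ) + (mval s (C j) : ℤ)
          ≤ (s.p : ℤ) + (mval (arcStep N s x) (C j) : ℤ) := by
        have h6'' : (arcStep N s x).p + mval s (C j)
            ≤ s.p + mval (arcStep N s x) (C j) := by omega
        exact_mod_cast h6''
      linarith
    · rw [if_neg hhit] at h6 ⊢
      have h6' : 1 + ((arcStep N s x).p : ℤ) + (mval s (C j) : ℤ)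
          ≤ (s.p : ℤ) + (mval (arcStep N s x) (C j) : ℤ) := by exact_mod_cast h6
      linarith
  · rw [if_neg hxC]
    have hm4 : mval s (C j) ≤ 4 * N := mval_le_of_card hok.1 (hCcard j)
    have hm4' : (mval s (C j) : ℤ) ≤ 4 * N := by exact_mod_cast hm4
    have hm0 : (0 : ℤ) ≤ (mval (arcStep N s x) (C (j + 1)) : ℤ) := Nat.cast_nonneg _
    by_cases hhit : x ∈ s.T1 ∨ x ∈ s.T2
    · rw [if_pos hhit]
      have hpp : (arcStep N s x).p = s.p := hp4 hhit
      rw [hpp]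
      linarith
    · rw [if_neg hhit]
      have h5 := hp5 (C (j + 1)) hmem1 hhit
      have h5' : 1 + ((arcStep N s x).p : ℤ)
          ≤ (s.p : ℤ) + (mval (arcStep N s x) (C (j + 1)) : ℤ) := by exact_mod_cast h5
      linarith
end
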